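/- arXiv:math/0607353 — 4 statements merged into one kernel-verified Lean document; each statement's English description precedes it below -/
import Mathlib

section
/- Let X be a compact uniform space (a uniform space whose induced topology is compact) with basepoint ∗, and let E be a symmetric entourage of X such that for every entourage F ⊆ E, every E-chain starting at ∗ is E-homotopic to an F-chain (this is the condition that X_E is chain connected). Then the E-deck group δ_E(X) of E-homotopy classes of E-loops at ∗ is finitely generated: there exist finitely many E-loops λ₁, …, λ_k at ∗ such that every E-loop at ∗ is E-homotopic to a finite concatenation of chains each of which is some λᵢ or its reversal λᵢ⁻¹. -/
universe u

/-- `l` is a (nonempty) `E`-chain, i.e. a finite sequence of points of `X` with all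
consecutive pairs in `E`. -/
def IsChainList {X : Type u} (E : Set (X × X)) (l : List X) : Prop :=
  l ≠ [] ∧ l.Chain' (fun a b => (a, b) ∈ E)

/-- `l'` is an (elementary) `E`-extension of `l`: it is obtained from `l` by inserting one
point, leaving the endpoints fixed, and both `l` and `l'` are `E`-chains. -/
def ChainExt {X : Type u} (E : Set (X × X)) (l l' : List X) : Prop :=
  (∃ (s t : List X) (x : X), l = s ++ t ∧ l' = s ++ x :: t) ∧
    l.head? = l'.head? ∧ l.getLast? = l'.getLast? ∧
    l.Chain' (fun a b => (a, b) ∈ E) ∧ l'.Chain' (fun a b => (a, b) ∈ E)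

/-- Two `E`-chains are `E`-homotopic if they are related by the equivalence relation
generated by one-point `E`-extensions. -/
def ChainHomotopic {X : Type u} (E : Set (X × X)) : List X → List X → Prop :=
  Relation.EqvGen (ChainExt E)

/-- `l` is an `E`-loop at `b`. -/
def IsLoopAt {X : Type u} (E : Set (X × X)) (b : X) (l : List X) : Prop :=
  IsChainList E l ∧ l.head? = some b ∧ l.getLast? = some b

/-- The concatenation of a finite list of loops at `b`, identifying the common basepoint. -/
def concatLoops {X : Type u} (b : X) (ws : List (List X)) : List X :=
  ws.foldl (fun acc w => acc ++ w.tail) [b]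

namespace DeckFG

variable {X : Type u} {E : Set (X × X)}

theorem hom_head? {l l' : List X} (h : ChainHomotopic E l l') : l.head? = l'.head? := by
  induction h with
  | rel _ _ h => exact h.2.1
  | refl => rfl
  | symm _ _ _ ih => exact ih.symm
  | trans _ _ _ _ _ ih1 ih2 => exact ih1.trans ih2

theorem hom_getLast? {l l' : List X} (h : ChainHomotopic E l l') : l.getLast? = l'.getLast? := by
  induction h with
  | rel _ _ h => exact h.2.2.1
  | refl => rfl
  | symm _ _ _ ih => exact ih.symm
  | trans _ _ _ _ _ ih1 ih2 => exact ih1.trans ih2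

theorem hom_insert {s t : List X} {x : X}
    (hh : (s ++ t).head? = (s ++ x :: t).head?)
    (hl : (s ++ t).getLast? = (s ++ x :: t).getLast?)
    (h1 : (s ++ t).Chain' (fun a b => (a, b) ∈ E))
    (h2 : (s ++ x :: t).Chain' (fun a b => (a, b) ∈ E)) :
    ChainHomotopic E (s ++ t) (s ++ x :: t) :=
  Relation.EqvGen.rel _ _ ⟨⟨s, t, x, rfl, rfl⟩, hh, hl, h1, h2⟩

theorem hom_delete {s t : List X} {x : X}
    (hh : (s ++ t).head? = (s ++ x :: t).head?)
    (hl : (s ++ t).getLast? = (s ++ x :: t).getLast?)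
    (h1 : (s ++ t).Chain' (fun a b => (a, b) ∈ E))
    (h2 : (s ++ x :: t).Chain' (fun a b => (a, b) ∈ E)) :
    ChainHomotopic E (s ++ x :: t) (s ++ t) :=
  Relation.EqvGen.symm _ _ (hom_insert hh hl h1 h2)

end DeckFG

namespace DeckFG2
open DeckFG
variable {X : Type u} {E : Set (X × X)}

theorem ext_ne_nil {u v : List X} (h : ChainExt E u v) : u ≠ [] := by
  obtain ⟨⟨s, t, x, rfl, rfl⟩, hh, -⟩ := h
  intro he
  rw [he] at hh
  exact (List.cons_ne_nil x t) (List.append_eq_nil_iff.1 (List.head?_eq_none_iff.1 hh.symm)).2 |>.elim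

theorem ext_append_right {u v : List X} (h : ChainExt E u v) (w : List X)
    (hw : w.Chain' (fun a b => (a, b) ∈ E))
    (hlink : ∀ x ∈ u.getLast?, ∀ y ∈ w.head?, (x, y) ∈ E) :
    ChainExt E (u ++ w) (v ++ w) := by
  have hune : u ≠ [] := ext_ne_nil h
  obtain ⟨⟨s, t, x, hu, hv⟩, hh, hl, h1, h2⟩ := h
  have hvne : v ≠ [] := by subst hv; simp
  refine ⟨⟨s, t ++ w, x, by rw [hu, List.append_assoc], by rw [hv]; simp⟩, ?_, ?_, ?_, ?_⟩
  · rw [List.head?_append_of_ne_nil _ hune, List.head?_append_of_ne_nil _ hvne, hh]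
  · rcases eq_or_ne w [] with rfl | hwne
    · simpa using hl
    · rw [List.getLast?_append_of_ne_nil _ hwne, List.getLast?_append_of_ne_nil _ hwne]
  · exact h1.append hw hlink
  · exact h2.append hw (fun a ha => hlink a (hl ▸ ha))

theorem ext_append_left {u v : List X} (h : ChainExt E u v) (w : List X)
    (hw : w.Chain' (fun a b => (a, b) ∈ E))
    (hlink : ∀ x ∈ w.getLast?, ∀ y ∈ u.head?, (x, y) ∈ E) :
    ChainExt E (w ++ u) (w ++ v) := by
  have hune : u ≠ [] := ext_ne_nil h
  obtain ⟨⟨s, t, x, hu, hv⟩, hh, hl, h1, h2⟩ := h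
  have hvne : v ≠ [] := by subst hv; simp
  refine ⟨⟨w ++ s, t, x, by rw [hu, List.append_assoc], by rw [hv, List.append_assoc]⟩,
    ?_, ?_, ?_, ?_⟩
  · rcases eq_or_ne w [] with rfl | hwne
    · simpa using hh
    · rw [List.head?_append_of_ne_nil _ hwne, List.head?_append_of_ne_nil _ hwne]
  · rw [List.getLast?_append_of_ne_nil _ hune, List.getLast?_append_of_ne_nil _ hvne, hl]
  · exact hw.append h1 hlink
  · exact hw.append h2 (fun a ha b hb => hlink a ha b (hh ▸ hb))

theorem hom_append_right (w : List X) (hw : w.Chain' (fun a b => (a, b) ∈ E))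
    {u v : List X} (h : ChainHomotopic E u v) :
    (∀ x ∈ u.getLast?, ∀ y ∈ w.head?, (x, y) ∈ E) → ChainHomotopic E (u ++ w) (v ++ w) := by
  induction h with
  | rel a c hac => exact fun hl => Relation.EqvGen.rel _ _ (ext_append_right hac w hw hl)
  | refl => exact fun _ => Relation.EqvGen.refl _
  | symm a c hac ih =>
      exact fun hl => Relation.EqvGen.symm _ _ (ih (by rw [hom_getLast? hac]; exact hl))
  | trans a c d h1 h2 ih1 ih2 =>
      exact fun hl => Relation.EqvGen.trans _ _ _ (ih1 hl)
        (ih2 (by rw [← hom_getLast? h1]; exact hl))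

theorem hom_append_left (w : List X) (hw : w.Chain' (fun a b => (a, b) ∈ E))
    {u v : List X} (h : ChainHomotopic E u v) :
    (∀ x ∈ w.getLast?, ∀ y ∈ u.head?, (x, y) ∈ E) → ChainHomotopic E (w ++ u) (w ++ v) := by
  induction h with
  | rel a c hac => exact fun hl => Relation.EqvGen.rel _ _ (ext_append_left hac w hw hl)
  | refl => exact fun _ => Relation.EqvGen.refl _
  | symm a c hac ih =>
      exact fun hl => Relation.EqvGen.symm _ _ (ih (by rw [hom_head? hac]; exact hl))
  | trans a c d h1 h2 ih1 ih2 =>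
      exact fun hl => Relation.EqvGen.trans _ _ _ (ih1 hl)
        (ih2 (by rw [← hom_head? h1]; exact hl))

end DeckFG2

namespace DeckFG3
open DeckFG DeckFG2
variable {X : Type u} {E : Set (X × X)}

theorem chain'_glue {u v : List X} {x : X}
    (h1 : (u ++ [x]).Chain' (fun a b => (a, b) ∈ E))
    (h2 : (x :: v).Chain' (fun a b => (a, b) ∈ E)) :
    (u ++ x :: v).Chain' (fun a b => (a, b) ∈ E) := by
  have := h1.append (List.isChain_cons.1 h2).2
    (by
      intro a ha c hc
      rw [List.getLast?_append_of_ne_nil _ (by simp)] at ha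
      simp at ha; subst ha
      exact (List.isChain_cons.1 h2).1 c hc)
  exact (by simpa using this : (u ++ x :: v).IsChain (fun a b => (a, b) ∈ E))

theorem chain'_prefix_x {u v : List X} {x : X}
    (h : (u ++ x :: v).Chain' (fun a b => (a, b) ∈ E)) :
    ((u ++ [x])).Chain' (fun a b => (a, b) ∈ E) :=
  h.prefix ⟨v, by simp⟩

theorem chain'_suffix_x {u v : List X} {x : X}
    (h : (u ++ x :: v).Chain' (fun a b => (a, b) ∈ E)) :
    ((x :: v)).Chain' (fun a b => (a, b) ∈ E) :=
  h.suffix ⟨u, rfl⟩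

theorem chain'_backtrack {u v : List X} {x y : X}
    (h : (u ++ x :: y :: x :: v).Chain' (fun a b => (a, b) ∈ E)) :
    (u ++ x :: v).Chain' (fun a b => (a, b) ∈ E) :=
  chain'_glue (chain'_prefix_x h)
    ((chain'_suffix_x (u := u ++ [x, y]) (by simpa using h)))

theorem hom_dup (hdiag : ∀ x : X, (x, x) ∈ E) {u v : List X} {x : X}
    (h : (u ++ x :: x :: v).Chain' (fun a b => (a, b) ∈ E)) :
    ChainHomotopic E (u ++ x :: x :: v) (u ++ x :: v) := by
  have h1 : ((u ++ [x]) ++ v).Chain' (fun a b => (a, b) ∈ E) := by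
    have := chain'_glue (u := u) (x := x) (v := v) (chain'_prefix_x h)
      (chain'_suffix_x (u := u ++ [x]) (by simpa using h))
    simpa using this
  have h2 : ((u ++ [x]) ++ x :: v).Chain' (fun a b => (a, b) ∈ E) := by simpa using h
  have hh : ((u ++ [x]) ++ v).head? = ((u ++ [x]) ++ x :: v).head? := by
    cases u <;> simp
  have hl : ((u ++ [x]) ++ v).getLast? = ((u ++ [x]) ++ x :: v).getLast? := by
    cases v <;> simp [List.getLast?_append_cons, List.getLast?_append_of_ne_nil]
  have := hom_delete (E := E) hh hl h1 h2
  simpa using this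

theorem hom_backtrack (hdiag : ∀ x : X, (x, x) ∈ E) {u v : List X} {x y : X}
    (h : (u ++ x :: y :: x :: v).Chain' (fun a b => (a, b) ∈ E)) :
    ChainHomotopic E (u ++ x :: y :: x :: v) (u ++ x :: v) := by
  have hxx : (u ++ x :: x :: v).Chain' (fun a b => (a, b) ∈ E) := by
    refine chain'_glue (chain'_prefix_x h) ?_
    refine (chain'_suffix_x (u := u ++ [x, y]) (by simpa using h)).cons ?_
    intro z hz; simp at hz; subst hz; exact hdiag x
  have step1 : ChainHomotopic E (u ++ x :: y :: x :: v) (u ++ x :: x :: v) := by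
    have hh : ((u ++ [x]) ++ x :: v).head? = ((u ++ [x]) ++ y :: x :: v).head? := by
      cases u <;> simp
    have hl : ((u ++ [x]) ++ x :: v).getLast? = ((u ++ [x]) ++ y :: x :: v).getLast? := by
      simp [List.getLast?_append_cons]
    have := hom_delete (E := E) hh hl (by simpa using hxx) (by simpa using h)
    simpa using this
  exact Relation.EqvGen.trans _ _ _ step1 (hom_dup hdiag hxx)

theorem hom_cancel (hdiag : ∀ x : X, (x, x) ∈ E) :
    ∀ (δ : List X) (q : X), δ.getLast? = some q → ∀ (P w : List X),
      (P ++ δ.reverse ++ δ.tail ++ w).Chain' (fun a b => (a, b) ∈ E) →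
      ChainHomotopic E (P ++ δ.reverse ++ δ.tail ++ w) (P ++ q :: w)
  | [], q, hq => by simp at hq
  | [x], q, hq => fun P w h => by
      simp only [List.getLast?_singleton, Option.some_inj] at hq
      subst hq
      have e : P ++ [x].reverse ++ [x].tail ++ w = P ++ x :: w := by simp
      rw [e]
      exact Relation.EqvGen.refl _
  | x :: x' :: δ'', q, hq => fun P w h => by
      have hq' : (x' :: δ'').getLast? = some q := by
        rwa [List.getLast?_cons_cons] at hq
      have e1 : P ++ (x :: x' :: δ'').reverse ++ (x :: x' :: δ'').tail ++ w
          = (P ++ δ''.reverse) ++ x' :: x :: x' :: (δ'' ++ w) := by simp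
      have e2 : P ++ (x' :: δ'').reverse ++ (x' :: δ'').tail ++ w
          = (P ++ δ''.reverse) ++ x' :: (δ'' ++ w) := by simp
      rw [e1] at h ⊢
      have step := hom_backtrack hdiag h
      have hch2 : ((P ++ δ''.reverse) ++ x' :: (δ'' ++ w)).Chain' (fun a b => (a, b) ∈ E) :=
        chain'_backtrack h
      have ih := hom_cancel hdiag (x' :: δ'') q hq' P w (by rw [e2]; exact hch2)
      rw [e2] at ih
      exact Relation.EqvGen.trans _ _ _ step ih

end DeckFG3

namespace DeckFG4
open DeckFG DeckFG2 DeckFG3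
variable {X : Type u} {E : Set (X × X)}

theorem hom_close (W : Set (X × X)) (r : X → X)
    (hW1 : ∀ a b : X, (a, b) ∈ W → (a, b) ∈ E)
    (hsym : ∀ a b : X, (a, b) ∈ W → (b, a) ∈ W)
    (hW2 : ∀ a b c : X, (a, b) ∈ W → (b, c) ∈ W → (a, c) ∈ E)
    (hW3 : ∀ a b c d : X, (a, b) ∈ W → (b, c) ∈ W → (c, d) ∈ W → (a, d) ∈ E)
    (hr : ∀ x, (x, r x) ∈ W) :
    ∀ (v u : List X), u ≠ [] →
      (u ++ v).Chain' (fun a b => (a, b) ∈ W) →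
      (∀ z, (u ++ v).getLast? = some z → r z = z) →
      ChainHomotopic E (u.map r ++ v) ((u ++ v).map r)
  | [], u, hu, hch, hlast => by
      simp only [List.append_nil]
      exact Relation.EqvGen.refl _
  | [y], u, hu, hch, hlast => by
      have hry : r y = y := hlast y (List.getLast?_concat (l := u))
      have e : (u ++ [y]).map r = u.map r ++ [y] := by simp [hry]
      rw [e]
      exact Relation.EqvGen.refl _
  | y :: z :: v'', u, hu, hch, hlast => by
      obtain ⟨p, hp⟩ : ∃ p, u.getLast? = some p := ⟨u.getLast hu, List.getLast?_eq_getLast hu⟩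
      have hsplit := List.isChain_append.1 hch
      have hchu : u.Chain' (fun a b => (a, b) ∈ W) := hsplit.1
      have hcons : (y :: z :: v'').Chain' (fun a b => (a, b) ∈ W) := hsplit.2.1
      have hlinkuy : (p, y) ∈ W := hsplit.2.2 p hp y rfl
      have hyz : (y, z) ∈ W := (List.isChain_cons_cons.1 hcons).1
      have hmapu : (u.map r).Chain' (fun a b => (a, b) ∈ E) :=
        (List.isChain_map r).2 (hchu.imp fun a b hab => hW3 _ _ _ _ (hsym _ _ (hr a)) hab (hr b))
      have hlastmap : (u.map r).getLast? = some (r p) := by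
        rw [List.getLast?_map, hp]; rfl
      have hmapune : u.map r ≠ [] := by simpa using hu
      have htailE : (z :: v'').Chain' (fun a b => (a, b) ∈ E) :=
        hcons.tail.imp fun a b hab => hW1 _ _ hab
      have hconsE : (y :: z :: v'').Chain' (fun a b => (a, b) ∈ E) :=
        hcons.imp fun a b hab => hW1 _ _ hab
      have hry : (r y :: z :: v'').Chain' (fun a b => (a, b) ∈ E) :=
        htailE.cons (by
          intro c hc; simp at hc; subst hc
          exact hW2 _ _ _ (hsym _ _ (hr y)) hyz)
      have hL0 : (u.map r ++ y :: z :: v'').Chain' (fun a b => (a, b) ∈ E) := by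
        refine hmapu.append hconsE ?_
        intro a ha c hc
        rw [hlastmap] at ha; simp at ha hc; subst ha; subst hc
        exact hW2 _ _ _ (hsym _ _ (hr p)) hlinkuy
      have hL2 : (u.map r ++ r y :: z :: v'').Chain' (fun a b => (a, b) ∈ E) := by
        refine hmapu.append hry ?_
        intro a ha c hc
        rw [hlastmap] at ha; simp at ha hc; subst ha; subst hc
        exact hW3 _ _ _ _ (hsym _ _ (hr p)) hlinkuy (hr y)
      have hL1 : ((u.map r ++ [y]) ++ r y :: z :: v'').Chain' (fun a b => (a, b) ∈ E) := by
        refine (chain'_prefix_x (v := z :: v'') hL0).append hry ?_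
        intro a ha c hc
        rw [List.getLast?_concat] at ha; simp at ha hc; subst ha; subst hc
        exact hW1 _ _ (hr y)
      -- step 1 : insert `r y` after `y`
      have step1 : ChainHomotopic E (u.map r ++ y :: z :: v'')
          ((u.map r ++ [y]) ++ r y :: z :: v'') := by
        have hne : u.map r ++ [y] ≠ [] := by simp
        have hh : ((u.map r ++ [y]) ++ z :: v'').head?
            = ((u.map r ++ [y]) ++ r y :: z :: v'').head? := by
          rw [List.head?_append_of_ne_nil (u.map r ++ [y]) hne,
            List.head?_append_of_ne_nil (u.map r ++ [y]) hne]
        have hl : ((u.map r ++ [y]) ++ z :: v'').getLast?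
            = ((u.map r ++ [y]) ++ r y :: z :: v'').getLast? := by
          simp [List.getLast?_append_cons]
        have := hom_insert (E := E) hh hl (by simpa using hL0) hL1
        simpa using this
      -- step 2 : delete `y`
      have step2 : ChainHomotopic E ((u.map r ++ [y]) ++ r y :: z :: v'')
          (u.map r ++ r y :: z :: v'') := by
        have hh : (u.map r ++ r y :: z :: v'').head?
            = (u.map r ++ y :: r y :: z :: v'').head? := by
          rw [List.head?_append_of_ne_nil (u.map r) hmapune,
            List.head?_append_of_ne_nil (u.map r) hmapune]
        have hl : (u.map r ++ r y :: z :: v'').getLast?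
            = (u.map r ++ y :: r y :: z :: v'').getLast? := by
          simp [List.getLast?_append_cons]
        have := hom_delete (E := E) hh hl hL2 (by simpa using hL1)
        simpa using this
      -- recursive call
      have ih := hom_close W r hW1 hsym hW2 hW3 hr (z :: v'') (u ++ [y]) (by simp)
        (by rw [List.append_assoc]; simpa using hch)
        (by intro c hc; exact hlast c (by simpa using hc))
      have e1 : (u ++ [y]).map r ++ z :: v'' = u.map r ++ r y :: z :: v'' := by simp
      have e2 : (u ++ [y]) ++ z :: v'' = u ++ y :: z :: v'' := by simp
      rw [e1, e2] at ih
      exact Relation.EqvGen.trans _ _ _ (Relation.EqvGen.trans _ _ _ step1 step2) ih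

end DeckFG4

def Reach {X : Type u} (E : Set (X × X)) (b a : X) : Prop :=
  ∃ l : List X, l.Chain' (fun p q => (p, q) ∈ E) ∧ l.head? = some b ∧ l.getLast? = some a

namespace DeckFG5
open DeckFG DeckFG2 DeckFG3 DeckFG4
variable {X : Type u} {E : Set (X × X)}

theorem getLast?_tail_ne {l : List X} (h : l.tail ≠ []) : l.tail.getLast? = l.getLast? := by
  match l with
  | [] => simp at h
  | [x] => simp at h
  | x :: y :: t => rw [List.tail_cons, List.getLast?_cons_cons]

theorem chain'_head_tail {l : List X} {x : X}
    (h : l.Chain' (fun a b => (a, b) ∈ E)) (hx : l.head? = some x) :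
    ∀ y ∈ l.tail.head?, (x, y) ∈ E := by
  match l with
  | [] => simp at hx
  | z :: t =>
    simp only [List.head?_cons, Option.some_inj] at hx
    subst hx
    exact (List.isChain_cons.1 h).1

theorem concatLoops_snoc (b : X) (ws : List (List X)) (w : List X) :
    concatLoops b (ws ++ [w]) = concatLoops b ws ++ w.tail := by
  simp [concatLoops, List.foldl_append]

theorem decomp (b : X) (hdiag : ∀ x : X, (x, x) ∈ E)
    (hsymE : ∀ x y : X, (x, y) ∈ E → (y, x) ∈ E)
    (PA : X → Prop) (β : X → List X)
    (hβb : β b = [b])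
    (hβ : ∀ a, Reach E b a → (β a).Chain' (fun p q => (p, q) ∈ E) ∧
      (β a).head? = some b ∧ (β a).getLast? = some a) :
    ∀ c : List X, c.Chain' (fun p q => (p, q) ∈ E) → c.head? = some b →
      (∀ x ∈ c, PA x) → ∀ a, c.getLast? = some a →
      ∃ ws : List (List X),
        (∀ w ∈ ws, ∃ a₁ a₂, PA a₁ ∧ PA a₂ ∧ Reach E b a₁ ∧ Reach E b a₂ ∧ (a₁, a₂) ∈ E ∧
          w = β a₁ ++ (β a₂).reverse) ∧
        ChainHomotopic E (c ++ ((β a).reverse).tail) (concatLoops b ws) := by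
  intro c
  induction c using List.reverseRecOn with
  | nil => intro _ hh; simp at hh
  | append_singleton c' x ih =>
    intro hch hhead hPA a hlast
    have hax : a = x := by rw [List.getLast?_concat] at hlast; exact (Option.some_inj.1 hlast).symm
    subst hax
    rcases eq_or_ne c' [] with rfl | hc'ne
    · -- c = [x], and x = b
      have hxb : a = b := by simpa using hhead
      subst hxb
      refine ⟨[], by simp, ?_⟩
      have e : [] ++ [a] ++ ((β a).reverse).tail = concatLoops a [] := by
        simp [hβb, concatLoops]
      rw [e]
      exact Relation.EqvGen.refl _
    · obtain ⟨a', ha'⟩ : ∃ a', c'.getLast? = some a' :=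
        ⟨c'.getLast hc'ne, List.getLast?_eq_getLast hc'ne⟩
      have hsplit := List.isChain_append.1 hch
      have hchc' : c'.Chain' (fun p q => (p, q) ∈ E) := hsplit.1
      have ha'x : (a', a) ∈ E := hsplit.2.2 a' ha' a rfl
      have hheadc' : c'.head? = some b := by
        rwa [List.head?_append_of_ne_nil _ hc'ne] at hhead
      have hRa' : Reach E b a' := ⟨c', hchc', hheadc', ha'⟩
      have hRa : Reach E b a := ⟨c' ++ [a], hch, hhead, List.getLast?_concat (l := c')⟩
      obtain ⟨hBa'c, hBa'h, hBa'l⟩ := hβ a' hRa'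
      obtain ⟨hBac, hBah, hBal⟩ := hβ a hRa
      have hBa'ne : β a' ≠ [] := by intro h; rw [h] at hBa'h; simp at hBa'h
      have hBane : β a ≠ [] := by intro h; rw [h] at hBah; simp at hBah
      -- reversed chains
      have hrevBa : ((β a).reverse).Chain' (fun p q => (p, q) ∈ E) := by
        refine List.isChain_reverse.2 ?_
        exact hBac.imp fun p q h => hsymE p q h
      have hrevBa' : ((β a').reverse).Chain' (fun p q => (p, q) ∈ E) := by
        refine List.isChain_reverse.2 ?_
        exact hBa'c.imp fun p q h => hsymE p q h
      have hrevBah : ((β a).reverse).head? = some a := by rw [List.head?_reverse, hBal]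
      have hrevBa'h : ((β a').reverse).head? = some a' := by rw [List.head?_reverse, hBa'l]
      have hrevBal : ((β a).reverse).getLast? = some b := by rw [List.getLast?_reverse, hBah]
      have hrevBa'l : ((β a').reverse).getLast? = some b := by rw [List.getLast?_reverse, hBa'h]
      -- the generator loop
      set L : List X := β a' ++ (β a).reverse with hL
      have hLc : L.Chain' (fun p q => (p, q) ∈ E) := by
        refine hBa'c.append hrevBa ?_
        intro p hp q hq
        rw [hBa'l] at hp; rw [hrevBah] at hq
        simp at hp hq; subst hp; subst hq; exact ha'x
      have hLh : L.head? = some b := by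
        rw [hL, List.head?_append_of_ne_nil _ hBa'ne, hBa'h]
      have hLtail : L.tail = (β a').tail ++ (β a).reverse := by
        rw [hL]
        match (β a'), hBa'ne with
        | z :: t, _ => simp
      have hLtne : L.tail ≠ [] := by
        rw [hLtail]; simp [hBane]
      -- chain of c' ++ (rev βa').tail , and its getLast? = b
      have hc'rev : (c' ++ ((β a').reverse).tail).Chain' (fun p q => (p, q) ∈ E) := by
        refine hchc'.append hrevBa'.tail ?_
        intro p hp q hq
        rw [ha'] at hp; simp at hp; subst hp
        exact chain'_head_tail hrevBa' hrevBa'h q hq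
      have hc'revlast : (c' ++ ((β a').reverse).tail).getLast? = some b := by
        rcases eq_or_ne ((β a').reverse).tail [] with htnil | htne
        · rw [htnil, List.append_nil, ha']
          -- (rev βa').tail = [] means βa' is a singleton, so a' = b
          have : (β a').reverse = [a'] := by
            have h1 : (β a').reverse ≠ [] := by simpa using hBa'ne
            match (β a').reverse, h1, hrevBa'h, htnil with
            | [z], _, hz, _ => simp at hz; rw [hz]
          have : β a' = [a'] := by
            have := congrArg List.reverse this
            simpa using this
          rw [this] at hBa'h; simp at hBa'h
          rw [hBa'h]
        · rw [List.getLast?_append_of_ne_nil _ htne, getLast?_tail_ne htne, hrevBa'l]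
      -- IH
      obtain ⟨ws', hws'G, hws'⟩ := ih hchc' hheadc'
        (fun z hz => hPA z (by simp [hz])) a' ha'
      refine ⟨ws' ++ [L], ?_, ?_⟩
      · intro w hw
        rcases List.mem_append.1 hw with hw | hw
        · exact hws'G w hw
        · simp at hw; subst hw
          exact ⟨a', a, hPA a' (by simp [List.mem_of_mem_getLast? (ha' ▸ rfl : a' ∈ c'.getLast?)]),
            hPA a (by simp), hRa', hRa, ha'x, rfl⟩
      · -- the homotopy
        rw [concatLoops_snoc]
        have hlinkbL : ∀ p ∈ (c' ++ ((β a').reverse).tail).getLast?,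
            ∀ q ∈ L.tail.head?, (p, q) ∈ E := by
          intro p hp q hq
          rw [hc'revlast] at hp; simp at hp; subst hp
          exact chain'_head_tail hLc hLh q hq
        have stepA : ChainHomotopic E ((c' ++ ((β a').reverse).tail) ++ L.tail)
            (concatLoops b ws' ++ L.tail) :=
          hom_append_right L.tail hLc.tail hws' hlinkbL
        have hTc : ((c' ++ ((β a').reverse).tail) ++ L.tail).Chain' (fun p q => (p, q) ∈ E) :=
          hc'rev.append hLc.tail hlinkbL
        obtain ⟨t, ht⟩ : ∃ t, (β a).reverse = a :: t := by
          cases h' : (β a).reverse with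
          | nil => rw [h'] at hrevBah; simp at hrevBah
          | cons z t => rw [h'] at hrevBah; simp at hrevBah; exact ⟨t, by rw [hrevBah]⟩
        obtain ⟨t', ht'⟩ : ∃ t', (β a').reverse = a' :: t' := by
          cases h' : (β a').reverse with
          | nil => rw [h'] at hrevBa'h; simp at hrevBa'h
          | cons z t'' => rw [h'] at hrevBa'h; simp at hrevBa'h; exact ⟨t'', by rw [hrevBa'h]⟩
        have hga' : c'.getLast hc'ne = a' := by
          have := List.getLast?_eq_getLast hc'ne
          rw [ha'] at this
          exact (Option.some_inj.1 this).symm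
        have hdrop : c'.dropLast ++ [a'] = c' := by
          conv_rhs => rw [← List.dropLast_append_getLast hc'ne]
          rw [hga']
        have eT : (c' ++ ((β a').reverse).tail) ++ L.tail
            = c'.dropLast ++ (β a').reverse ++ (β a').tail ++ (β a).reverse := by
          rw [hLtail, ← hdrop]
          simp [ht']
        have cancel := hom_cancel hdiag (β a') a' hBa'l c'.dropLast ((β a).reverse)
          (by rw [← eT]; exact hTc)
        have eL : c'.dropLast ++ a' :: (β a).reverse = c' ++ [a] ++ ((β a).reverse).tail := by
          rw [← hdrop]
          simp [ht]
        rw [eT] at stepA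
        rw [← eL]
        exact Relation.EqvGen.trans _ _ _ (Relation.EqvGen.symm _ _ cancel) stepA

end DeckFG5


open DeckFG DeckFG2 DeckFG3 DeckFG4 DeckFG5 in
/-- (Statement 8) Let `X` be a compact uniform space with basepoint `∗` and `E` a symmetric
entourage such that every `E`-chain starting at `∗` is `E`-homotopic to an `F`-chain for
every entourage `F ⊆ E` (i.e. `X_E` is chain connected).  Then the `E`-deck group `δ_E(X)`
is finitely generated: there are finitely many `E`-loops `λ₁, …, λ_k` at `∗` such that every
`E`-loop at `∗` is `E`-homotopic to a finite concatenation of chains, each of which is some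
`λᵢ` or its reversal `λᵢ⁻¹`. -/
theorem deckGroup_finitely_generated {X : Type u} [UniformSpace X] [CompactSpace X]
    (b : X) (E : Set (X × X)) (hE : E ∈ uniformity X) (hEsym : SetRel.IsSymm E)
    (hchain : ∀ F ∈ uniformity X, SetRel.IsSymm F → F ⊆ E →
      ∀ l : List X, IsChainList E l → l.head? = some b →
        ∃ l' : List X, IsChainList F l' ∧ ChainHomotopic E l l') :
    ∃ gens : List (List X),
      (∀ w ∈ gens, IsLoopAt E b w) ∧
      ∀ γ : List X, IsLoopAt E b γ →
        ∃ ws : List (List X),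
          (∀ w ∈ ws, w ∈ gens ∨ ∃ v ∈ gens, w = v.reverse) ∧
          ChainHomotopic E γ (concatLoops b ws) := by
  classical
  have hdiag : ∀ x : X, (x, x) ∈ E := fun x => refl_mem_uniformity hE
  have hsymE : ∀ x y : X, (x, y) ∈ E → (y, x) ∈ E := fun x y h => hEsym.symm x y h
  obtain ⟨W, hW, hWsym, hWE3⟩ := comp_comp_symm_mem_uniformity_sets hE
  have hdiagW : ∀ x : X, (x, x) ∈ W := fun x => refl_mem_uniformity hW
  have hsymW : ∀ x y : X, (x, y) ∈ W → (y, x) ∈ W := fun x y h => hWsym.symm x y h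
  have hW3 : ∀ a c d e : X, (a, c) ∈ W → (c, d) ∈ W → (d, e) ∈ W → (a, e) ∈ E := by
    intro a c d e h1 h2 h3
    exact hWE3 ⟨d, ⟨c, h1, h2⟩, h3⟩
  have hW2 : ∀ a c d : X, (a, c) ∈ W → (c, d) ∈ W → (a, d) ∈ E :=
    fun a c d h1 h2 => hW3 a c d d h1 h2 (hdiagW d)
  have hW1 : ∀ a c : X, (a, c) ∈ W → (a, c) ∈ E :=
    fun a c h => hW2 a c c h (hdiagW c)
  have hWsubE : W ⊆ E := fun p hp => hW1 p.1 p.2 hp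
  -- finite net
  obtain ⟨s, hsfin, hscov⟩ := (isCompact_univ (X := X)).totallyBounded W hW
  have hex : ∀ x : X, ∃ y, (y ∈ s ∨ y = b) ∧ (x, y) ∈ W := by
    intro x
    have hx := hscov (Set.mem_univ x)
    simp only [Set.mem_iUnion, Set.mem_setOf_eq, exists_prop] at hx
    obtain ⟨y, hy, hxy⟩ := hx
    exact ⟨y, Or.inl hy, hxy⟩
  set r : X → X := fun x => if x = b then b else (hex x).choose with hrdef
  have hrb : r b = b := by simp [hrdef]
  have hrW : ∀ x, (x, r x) ∈ W := by
    intro x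
    by_cases hx : x = b
    · rw [hx, hrb]; exact hdiagW b
    · simp only [hrdef, if_neg hx]; exact (hex x).choose_spec.2
  have hrPA : ∀ x, r x ∈ s ∨ r x = b := by
    intro x
    by_cases hx : x = b
    · rw [hx, hrb]; exact Or.inr rfl
    · simp only [hrdef, if_neg hx]; exact (hex x).choose_spec.1
  -- chains to net points
  set β : X → List X := fun a =>
    if a = b then [b] else if h : Reach E b a then h.choose else [b] with hβdef
  have hβb : β b = [b] := by simp [hβdef]
  have hβ : ∀ a, Reach E b a → (β a).Chain' (fun p q => (p, q) ∈ E) ∧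
      (β a).head? = some b ∧ (β a).getLast? = some a := by
    intro a ha
    by_cases hab : a = b
    · subst hab; rw [hβb]; exact ⟨List.isChain_singleton _, by simp, by simp⟩
    · simp only [hβdef, if_neg hab, dif_pos ha]
      exact ha.choose_spec
  set PA : X → Prop := fun x => x ∈ s ∨ x = b with hPAdef
  set A : Finset X := hsfin.toFinset ∪ {b} with hAdef
  have hPAA : ∀ x, PA x ↔ x ∈ A := by
    intro x
    simp [hPAdef, hAdef, Set.Finite.mem_toFinset]
    exact or_comm
  -- generators
  set gens : List (List X) :=
    ((A ×ˢ A).filter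
        (fun p => (p.1, p.2) ∈ E ∧ Reach E b p.1 ∧ Reach E b p.2)).toList.map
      (fun p => β p.1 ++ (β p.2).reverse) with hgensdef
  have hgensmem : ∀ w, w ∈ gens ↔ ∃ a₁ a₂, (a₁ ∈ A ∧ a₂ ∈ A) ∧
      ((a₁, a₂) ∈ E ∧ Reach E b a₁ ∧ Reach E b a₂) ∧ w = β a₁ ++ (β a₂).reverse := by
    intro w
    simp only [hgensdef, List.mem_map, Finset.mem_toList, Finset.mem_filter, Finset.mem_product,
      Prod.exists]
    constructor
    · rintro ⟨a₁, a₂, ⟨hm, hrest⟩, rfl⟩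
      exact ⟨a₁, a₂, hm, hrest, rfl⟩
    · rintro ⟨a₁, a₂, hm, hrest, rfl⟩
      exact ⟨a₁, a₂, ⟨hm, hrest⟩, rfl⟩
  have hgensloop : ∀ w ∈ gens, IsChainList E w ∧ w.head? = some b ∧ w.getLast? = some b := by
    intro w hw
    obtain ⟨a₁, a₂, -, ⟨h12, hR1, hR2⟩, rfl⟩ := (hgensmem w).1 hw
    obtain ⟨hc1, hh1, hl1⟩ := hβ a₁ hR1
    obtain ⟨hc2, hh2, hl2⟩ := hβ a₂ hR2
    have hne1 : β a₁ ≠ [] := by intro h; rw [h] at hh1; simp at hh1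
    have hne2 : β a₂ ≠ [] := by intro h; rw [h] at hh2; simp at hh2
    have hrev2 : ((β a₂).reverse).Chain' (fun p q => (p, q) ∈ E) := by
      refine List.isChain_reverse.2 ?_
      exact hc2.imp fun p q h => hsymE p q h
    refine ⟨⟨by simp [hne1], ?_⟩, ?_, ?_⟩
    · refine hc1.append hrev2 ?_
      intro p hp q hq
      rw [hl1] at hp
      rw [List.head?_reverse, hl2] at hq
      simp at hp hq; subst hp; subst hq; exact h12
    · rw [List.head?_append_of_ne_nil _ hne1, hh1]
    · rw [List.getLast?_append_of_ne_nil _ (by simpa using hne2), List.getLast?_reverse, hh2]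
  refine ⟨gens, hgensloop, ?_⟩
  rintro γ ⟨⟨hγne, hγch⟩, hγh, hγl⟩
  obtain ⟨l', ⟨hl'ne, hl'W⟩, hom1⟩ := hchain W hW hWsym hWsubE γ ⟨hγne, hγch⟩ hγh
  have hl'h : l'.head? = some b := by rw [← hom_head? hom1, hγh]
  have hl'l : l'.getLast? = some b := by rw [← hom_getLast? hom1, hγl]
  obtain ⟨tl, rfl⟩ : ∃ tl, l' = b :: tl := by
    cases l' with
    | nil => simp at hl'h
    | cons z t =>
      simp only [List.head?_cons, Option.some_inj] at hl'h
      exact ⟨t, by rw [hl'h]⟩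
  set l' : List X := b :: tl with hl'def
  have close := hom_close (E := E) W r hW1 hsymW hW2 hW3 hrW tl [b] (by simp)
    (by simpa using hl'W)
    (by
      intro z hz
      have : z = b := by
        rw [show ([b] : List X) ++ tl = l' from rfl, hl'l] at hz
        exact (Option.some_inj.1 hz.symm)
      rw [this, hrb])
  have hom2 : ChainHomotopic E l' (l'.map r) := by
    have e1 : ([b] : List X).map r ++ tl = l' := by simp [hrb, hl'def]
    have e2 : (([b] : List X) ++ tl).map r = l'.map r := rfl
    rw [e1, e2] at close
    exact close
  set m : List X := l'.map r with hmdef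
  have hmch : m.Chain' (fun p q => (p, q) ∈ E) := by
    rw [hmdef]
    exact (List.isChain_map r).2 (hl'W.imp fun p q h =>
      hW3 _ _ _ _ (hsymW _ _ (hrW p)) h (hrW q))
  have hmh : m.head? = some b := by
    rw [hmdef, List.head?_map, hl'h]
    simp [hrb]
  have hml : m.getLast? = some b := by
    rw [hmdef, List.getLast?_map, hl'l]
    simp [hrb]
  have hmPA : ∀ x ∈ m, PA x := by
    intro x hx
    rw [hmdef, List.mem_map] at hx
    obtain ⟨z, -, rfl⟩ := hx
    exact hrPA z
  obtain ⟨ws, hwsG, hws⟩ := decomp b hdiag hsymE PA β hβb hβ m hmch hmh hmPA b hml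
  have hom3 : ChainHomotopic E m (concatLoops b ws) := by
    rw [hβb] at hws
    simpa using hws
  refine ⟨ws, ?_, ?_⟩
  · intro w hw
    left
    obtain ⟨a₁, a₂, hPA1, hPA2, hR1, hR2, h12, rfl⟩ := hwsG w hw
    exact (hgensmem _).2 ⟨a₁, a₂, ⟨(hPAA a₁).1 hPA1, (hPAA a₂).1 hPA2⟩, ⟨h12, hR1, hR2⟩, rfl⟩
  · exact Relation.EqvGen.trans _ _ _ hom1 (Relation.EqvGen.trans _ _ _ hom2 hom3)
end

section
/- Let X be a uniform space and E a symmetric entourage such that every E-ball is chain connected as a uniform subspace, i.e. for every entourage F of X and every x ∈ X, any two points of B(x,E) are joined by an F-chain all of whose points lie in B(x,E). Then for every entourage F ⊆ E, every E-chain in X is E-homotopic (with endpoints fixed) to an F-chain with the same endpoints; in particular every E-loop at a point ∗ is E-homotopic to an F-loop at ∗. -/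
open UniformSpace

universe u

lemma chainHomotopic_head {X : Type u} {E : Set (X × X)} {l l' : List X}
    (h : ChainHomotopic E l l') : l.head? = l'.head? := by
  induction h with
  | rel _ _ h => exact h.2.1
  | refl => rfl
  | symm _ _ _ ih => exact ih.symm
  | trans _ _ _ _ _ ih1 ih2 => exact ih1.trans ih2

lemma chainHomotopic_getLast {X : Type u} {E : Set (X × X)} {l l' : List X}
    (h : ChainHomotopic E l l') : l.getLast? = l'.getLast? := by
  induction h with
  | rel _ _ h => exact h.2.2.1
  | refl => rfl
  | symm _ _ _ ih => exact ih.symm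
  | trans _ _ _ _ _ ih1 ih2 => exact ih1.trans ih2

lemma getLast?_cons_ne_nil {X : Type u} (a : X) {l : List X} (h : l ≠ []) :
    (a :: l).getLast? = l.getLast? := by
  cases l with
  | nil => exact absurd rfl h
  | cons b t => exact List.getLast?_cons_cons

lemma cons_chainHomotopic {X : Type u} {E : Set (X × X)} {a b : X} (hab : (a, b) ∈ E) :
    ∀ {l l' : List X}, ChainHomotopic E l l' → l.head? = some b →
      ChainHomotopic E (a :: l) (a :: l') := by
  intro l l' h
  induction h with
  | rel u v h =>
    intro hb
    obtain ⟨⟨s, t, x, hu, hv⟩, hh, hlast, hc, hc'⟩ := h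
    have hune : u ≠ [] := by rintro rfl; simp at hb
    have hvne : v ≠ [] := by
      rintro rfl; rw [hb] at hh; simp at hh
    refine Relation.EqvGen.rel _ _ ⟨⟨a :: s, t, x, by simp [hu], by simp [hv]⟩, rfl, ?_, ?_, ?_⟩
    · rw [getLast?_cons_ne_nil a hune, getLast?_cons_ne_nil a hvne, hlast]
    · refine List.isChain_cons.mpr ⟨?_, hc⟩
      intro y hy; rw [hb] at hy; simp at hy; subst hy; exact hab
    · refine List.isChain_cons.mpr ⟨?_, hc'⟩
      intro y hy; rw [← hh, hb] at hy; simp at hy; subst hy; exact hab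
  | refl => intro _; exact Relation.EqvGen.refl _
  | symm u v h ih =>
    intro hb
    have : u.head? = some b := (chainHomotopic_head h).trans hb
    exact Relation.EqvGen.symm _ _ (ih this)
  | trans u v w h1 h2 ih1 ih2 =>
    intro hb
    have : v.head? = some b := (chainHomotopic_head h1).symm.trans hb
    exact Relation.EqvGen.trans _ _ _ (ih1 hb) (ih2 this)

/-- Inserting a whole `E`-chain `w` between `a` and `b` in an `E`-chain `a :: b :: r`,
provided every point of `w` is `E`-close to `a`. -/
lemma insert_seg {X : Type u} {E : Set (X × X)} (a : X) :
    ∀ (w : List X) (b : X) (r : List X),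
      (∀ p ∈ w, (a, p) ∈ E) →
      (w ++ [b]).Chain' (fun p q => (p, q) ∈ E) →
      (a :: b :: r).Chain' (fun p q => (p, q) ∈ E) →
      ChainHomotopic E (a :: b :: r) (a :: (w ++ b :: r)) := by
  intro w
  induction w with
  | nil => intro b r _ _ _; exact Relation.EqvGen.refl _
  | cons x w' ih =>
    intro b r hw hcw hc
    have hab : (a, b) ∈ E := (List.isChain_cons.mp hc).1 b rfl
    have hbr : (b :: r).Chain' (fun p q => (p, q) ∈ E) := (List.isChain_cons.mp hc).2
    have hcw' : (w' ++ [b]).Chain' (fun p q => (p, q) ∈ E) :=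
      (List.isChain_cons.mp hcw).2
    have hxhd : ∀ y ∈ (w' ++ [b]).head?, (x, y) ∈ E := (List.isChain_cons.mp hcw).1
    have step1 : ChainHomotopic E (a :: b :: r) (a :: (w' ++ b :: r)) :=
      ih b r (fun p hp => hw p (List.mem_cons_of_mem _ hp)) hcw' hc
    -- heads agree
    have hdeq : (w' ++ [b]).head? = (w' ++ b :: r).head? := by cases w' <;> simp
    have hahd : ∀ y ∈ (w' ++ b :: r).head?, (a, y) ∈ E := by
      intro y hy
      cases w' with
      | nil => simp at hy; subst hy; exact hab
      | cons z w'' => simp at hy; subst hy; exact hw z (by simp)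
    have hchain1 : (a :: (w' ++ b :: r)).Chain' (fun p q => (p, q) ∈ E) := by
      refine List.isChain_cons.mpr ⟨hahd, ?_⟩
      have : (w' ++ [b]) ++ r = w' ++ b :: r := by simp
      rw [← this]
      exact hcw'.append hbr.tail (by
        intro p hp q hq
        rw [List.getLast?_concat] at hp
        simp at hp; subst hp
        exact (List.isChain_cons.mp hbr).1 q hq)
    have hax : (a, x) ∈ E := hw x (by simp)
    have hchain2 : (a :: x :: (w' ++ b :: r)).Chain' (fun p q => (p, q) ∈ E) := by
      refine List.isChain_cons.mpr ⟨by intro y hy; simp at hy; subst hy; exact hax, ?_⟩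
      refine List.isChain_cons.mpr ⟨?_, hchain1.tail⟩
      intro y hy
      exact hxhd y (by rwa [hdeq])
    have hne : w' ++ b :: r ≠ [] := by simp
    have step2 : ChainExt E (a :: (w' ++ b :: r)) (a :: x :: (w' ++ b :: r)) := by
      refine ⟨⟨[a], w' ++ b :: r, x, rfl, rfl⟩, rfl, ?_, hchain1, hchain2⟩
      rw [getLast?_cons_ne_nil a hne, getLast?_cons_ne_nil a (by simp),
        getLast?_cons_ne_nil x hne]
    exact Relation.EqvGen.trans _ _ _ step1 (Relation.EqvGen.rel _ _ step2)

/-- (Statement 14) Let `X` be a uniform space and `E` a symmetric entourage such that every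
`E`-ball is chain connected as a uniform subspace: for every entourage `F` and every `x`,
any two points of `B(x,E)` are joined by an `F`-chain all of whose points lie in `B(x,E)`.
Then for every entourage `F ⊆ E`, every `E`-chain in `X` is `E`-homotopic (with the same
endpoints) to an `F`-chain; in particular every `E`-loop at a point `∗` is `E`-homotopic to
an `F`-loop at `∗`. -/
theorem chainHomotopic_to_finer_chain {X : Type u} [UniformSpace X]
    (E : Set (X × X)) (hE : E ∈ uniformity X) (hEsym : SetRel.IsSymm E)
    (hballcc : ∀ F ∈ uniformity X, SetRel.IsSymm F → ∀ x : X, ∀ y ∈ ball x E, ∀ z ∈ ball x E,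
      ∃ l : List X, IsChainList F l ∧ l.head? = some y ∧ l.getLast? = some z ∧
        ∀ p ∈ l, p ∈ ball x E) :
    ∀ F ∈ uniformity X, SetRel.IsSymm F → F ⊆ E →
      (∀ γ : List X, IsChainList E γ →
        ∃ γ' : List X, IsChainList F γ' ∧ ChainHomotopic E γ γ' ∧
          γ'.head? = γ.head? ∧ γ'.getLast? = γ.getLast?) ∧
      (∀ (x₀ : X) (γ : List X), IsChainList E γ → γ.head? = some x₀ → γ.getLast? = some x₀ →
        ∃ γ' : List X, IsChainList F γ' ∧ ChainHomotopic E γ γ' ∧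
          γ'.head? = some x₀ ∧ γ'.getLast? = some x₀) := by
  intro F hF hFsym hFE
  have main : ∀ γ : List X, IsChainList E γ →
      ∃ γ' : List X, IsChainList F γ' ∧ ChainHomotopic E γ γ' := by
    rintro γ ⟨hne, hc⟩
    induction γ with
    | nil => exact absurd rfl hne
    | cons a γ₂ ih =>
      cases γ₂ with
      | nil => exact ⟨[a], ⟨by simp, by simp [List.Chain']⟩, Relation.EqvGen.refl _⟩
      | cons b γ₃ =>
        have hab : (a, b) ∈ E := (List.isChain_cons.mp hc).1 b rfl
        obtain ⟨δ', ⟨hδne, hδc⟩, hδhom⟩ := ih (by simp) (List.isChain_cons.mp hc).2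
        have hδhd : δ'.head? = some b := (chainHomotopic_head hδhom).symm
        obtain ⟨r, rfl⟩ : ∃ r, δ' = b :: r := by
          cases δ' with
          | nil => simp at hδhd
          | cons c r => simp at hδhd; subst hδhd; exact ⟨r, rfl⟩
        have haa : a ∈ ball a E := mem_ball_self a hE
        have habm : b ∈ ball a E := hab
        obtain ⟨m, ⟨hmne, hmc⟩, hmhd, hmlast, hmball⟩ := hballcc F hF hFsym a a haa b habm
        -- homotopy step one
        have h1 : ChainHomotopic E (a :: b :: γ₃) (a :: b :: r) :=
          cons_chainHomotopic hab hδhom rfl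
        obtain ⟨mt, rfl⟩ : ∃ mt, m = a :: mt := by
          cases m with
          | nil => simp at hmhd
          | cons c mt => simp at hmhd; subst hmhd; exact ⟨mt, rfl⟩
        rcases List.eq_nil_or_concat mt with rfl | ⟨w, c, rfl⟩
        · -- m = [a], so a = b ; delete the duplicate point
          simp at hmlast
          subst hmlast
          have hchain2 : (a :: a :: r).Chain' (fun p q => (p, q) ∈ E) := by
            refine List.isChain_cons.mpr ⟨?_, List.IsChain.imp (fun p q h => hFE h) hδc⟩
            intro y hy; simp at hy; subst hy; exact hab
          have hchain1 : (a :: r).Chain' (fun p q => (p, q) ∈ E) := hchain2.tail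
          have hext : ChainExt E (a :: r) (a :: a :: r) := by
            refine ⟨⟨[a], r, a, rfl, rfl⟩, rfl, ?_, hchain1, hchain2⟩
            cases r with
            | nil => rfl
            | cons z r' => rw [getLast?_cons_ne_nil a (l := z :: r') (by simp),
                getLast?_cons_ne_nil a (l := a :: z :: r') (by simp),
                getLast?_cons_ne_nil a (l := z :: r') (by simp)]
          refine ⟨a :: r, ⟨by simp, ?_⟩, Relation.EqvGen.trans _ _ _ h1
            (Relation.EqvGen.symm _ _ (Relation.EqvGen.rel _ _ hext))⟩
          exact List.isChain_cons.mpr ⟨(List.isChain_cons.mp hδc).1, hδc.tail⟩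
        · -- m = a :: w ++ [c] with c = b
          simp only [List.concat_eq_append] at hmc hmlast hmball
          have : ((a :: (w ++ [c]))).getLast? = some c := by
            rw [getLast?_cons_ne_nil a (by simp), List.getLast?_concat]
          rw [this] at hmlast
          have hcb : c = b := by simpa using hmlast
          subst hcb
          have hcEw : (w ++ [c]).Chain' (fun p q => (p, q) ∈ E) :=
            List.IsChain.imp (fun p q h => hFE h) hmc.tail
          have hcE : (a :: c :: r).Chain' (fun p q => (p, q) ∈ E) :=
            List.isChain_cons.mpr ⟨by intro y hy; simp at hy; subst hy; exact hab,
              List.IsChain.imp (fun p q h => hFE h) hδc⟩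
          have hwball : ∀ p ∈ w, (a, p) ∈ E := by
            intro p hp
            exact hmball p (by simp [hp])
          have h2 : ChainHomotopic E (a :: c :: r) (a :: (w ++ c :: r)) :=
            insert_seg a w c r hwball hcEw hcE
          refine ⟨a :: (w ++ c :: r), ⟨by simp, ?_⟩, Relation.EqvGen.trans _ _ _ h1 h2⟩
          -- F-chain: (a :: w ++ [c]) ++ r
          have heq : (a :: (w ++ [c])) ++ r = a :: (w ++ c :: r) := by simp
          rw [← heq]
          refine hmc.append hδc.tail ?_
          intro p hp q hq
          rw [getLast?_cons_ne_nil a (by simp), List.getLast?_concat] at hp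
          simp at hp; subst hp
          exact (List.isChain_cons.mp hδc).1 q hq
  refine ⟨?_, ?_⟩
  · intro γ hγ
    obtain ⟨γ', h1, h2⟩ := main γ hγ
    exact ⟨γ', h1, h2, (chainHomotopic_head h2).symm, (chainHomotopic_getLast h2).symm⟩
  · intro x₀ γ hγ hh hl
    obtain ⟨γ', h1, h2⟩ := main γ hγ
    exact ⟨γ', h1, h2, (chainHomotopic_head h2).symm.trans hh,
      (chainHomotopic_getLast h2).symm.trans hl⟩
end

section
/- Let X be a connected, simply connected (every loop in X is null-homotopic), uniformly locally pathwise connected uniform space. Then for every symmetric entourage E of X whose E-balls are all open and path connected, every E-loop in X is E-homotopic to the trivial one-point chain at its basepoint. -/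
open UniformSpace

universe u

/-- Symmetric relation (the former Mathlib `SymmetricRel`, removed since). -/
def SymmetricRel {α : Type*} (V : Set (α × α)) : Prop :=
  Prod.swap ⁻¹' V = V

namespace ChainProof

variable {X : Type u} {E : Set (X × X)}

/-- `listOf f m = [f 0, f 1, ..., f m]`. -/
def listOf (f : ℕ → X) (m : ℕ) : List X := (List.range (m+1)).map f

lemma listOf_zero (f : ℕ → X) : listOf f 0 = [f 0] := rfl

lemma listOf_succ (f : ℕ → X) (m : ℕ) : listOf f (m+1) = listOf f m ++ [f (m+1)] := by
  simp [listOf, List.range_succ]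

lemma listOf_ne_nil (f : ℕ → X) (m : ℕ) : listOf f m ≠ [] := by
  simp [listOf, List.range_succ]

lemma head?_listOf (f : ℕ → X) (m : ℕ) : (listOf f m).head? = some (f 0) := by
  simp [listOf, List.range_succ_eq_map]

lemma getLast?_listOf (f : ℕ → X) (m : ℕ) : (listOf f m).getLast? = some (f m) := by
  induction m with
  | zero => rfl
  | succ m _ => rw [listOf_succ]; simp

lemma chain'_listOf {f : ℕ → X} {m : ℕ} (h : ∀ k < m, (f k, f (k+1)) ∈ E) :
    (listOf f m).Chain' (fun a b => (a, b) ∈ E) := by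
  rw [listOf]; simp only [List.Chain']; rw [List.isChain_map]
  exact (List.isChain_range_succ _ m).2 h

lemma listOf_congr {f g : ℕ → X} {m : ℕ} (h : ∀ k ≤ m, f k = g k) :
    listOf f m = listOf g m := by
  unfold listOf
  apply List.map_congr_left
  intro k hk
  exact h k (by simpa [Nat.lt_succ_iff] using List.mem_range.1 hk)

lemma hom_getLast? {l l' : List X} (h : ChainHomotopic E l l') : l.getLast? = l'.getLast? := by
  induction h with
  | rel _ _ h => exact h.2.2.1
  | refl => rfl
  | symm _ _ _ ih => exact ih.symm
  | trans _ _ _ _ _ ih1 ih2 => exact ih1.trans ih2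

lemma hom_append_right {l l' : List X} (h : ChainHomotopic E l l') :
    ∀ w z : X, l.getLast? = some w → (w, z) ∈ E →
    ChainHomotopic E (l ++ [z]) (l' ++ [z]) := by
  induction h with
  | rel a b hab =>
    intro w z hw hz
    obtain ⟨⟨s, t, x, h1, h2⟩, hh, hl, hc, hc'⟩ := hab
    have ha_ne : a ≠ [] := by
      intro e
      rw [e] at hh h1
      have : b = [] := List.head?_eq_none_iff.1 (by simpa using hh.symm)
      simp [this] at h2
    have hb_ne : b ≠ [] := by simp [h2]
    apply Relation.EqvGen.rel
    refine ⟨⟨s, t ++ [z], x, by simp [h1], by simp [h2]⟩, ?_, ?_, ?_, ?_⟩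
    · rw [List.head?_append_of_ne_nil _ ha_ne, List.head?_append_of_ne_nil _ hb_ne, hh]
    · simp
    · simp only [List.Chain']; rw [List.isChain_append]
      refine ⟨hc, List.isChain_singleton z, ?_⟩
      intro u hu v hv
      simp at hv
      rw [hw] at hu; simp at hu
      rw [← hu, ← hv]; exact hz
    · simp only [List.Chain']; rw [List.isChain_append]
      refine ⟨hc', List.isChain_singleton z, ?_⟩
      intro u hu v hv
      simp at hv
      rw [← hl, hw] at hu; simp at hu
      rw [← hu, ← hv]; exact hz
  | refl a => intro w z _ _; exact Relation.EqvGen.refl _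
  | symm a b hab ih =>
    intro w z hw hz
    exact Relation.EqvGen.symm _ _ (ih w z ((hom_getLast? hab).trans hw) hz)
  | trans a b c hab hbc ih1 ih2 =>
    intro w z hw hz
    exact Relation.EqvGen.trans _ _ _ (ih1 w z hw hz)
      (ih2 w z ((hom_getLast? hab).symm.trans hw) hz)

lemma getLast?_cons_of_ne_nil {α : Type*} (a : α) {t : List α} (h : t ≠ []) :
    (a :: t).getLast? = t.getLast? := by
  cases t with
  | nil => exact absurd rfl h
  | cons b l => exact List.getLast?_cons_cons

lemma listOf_decomp (f : ℕ → X) {j m : ℕ} (h : j < m) :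
    listOf f m = listOf f j ++ (List.range' (j+1) (m - j)).map f := by
  unfold listOf
  rw [← List.map_append]
  congr 1
  rw [List.range_eq_range', List.range_eq_range']
  have := List.range'_append (s := 0) (m := j+1) (n := m - j) (step := 1)
  simp only [Nat.one_mul, Nat.zero_add] at this
  rw [this]
  congr 1
  omega

/-- The ladder lemma: two chains with the same endpoints which are pointwise close
(together with one diagonal) are chain homotopic. -/
lemma ladder (a b : ℕ → X) (m : ℕ)
    (ha : ∀ k < m, (a k, a (k+1)) ∈ E)
    (hb : ∀ k < m, (b k, b (k+1)) ∈ E)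
    (hab : ∀ k ≤ m, (b k, a k) ∈ E)
    (hd : ∀ k < m, (b k, a (k+1)) ∈ E)
    (h0 : a 0 = b 0) (hm : a m = b m) :
    ChainHomotopic E (listOf a m) (listOf b m) := by
  classical
  set mix : ℕ → ℕ → X := fun j k => if k ≤ j then b k else a k with hmix
  have chain_mix : ∀ j, (listOf (mix j) m).Chain' (fun u v => (u, v) ∈ E) := by
    intro j
    apply chain'_listOf
    intro k hk
    by_cases h1 : k + 1 ≤ j
    · simp only [hmix, if_pos h1, if_pos (Nat.le_of_succ_le h1)]
      exact hb k hk
    · by_cases h2 : k ≤ j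
      · have : k = j := by omega
        simp only [hmix, if_pos h2, if_neg h1]
        exact hd k hk
      · simp only [hmix, if_neg h1, if_neg h2]
        exact ha k hk
  have step : ∀ j, j < m → ChainHomotopic E (listOf (mix j) m) (listOf (mix (j+1)) m) := by
    intro j hj
    by_cases hba : a (j+1) = b (j+1)
    · have : listOf (mix j) m = listOf (mix (j+1)) m := by
        apply listOf_congr
        intro k _
        by_cases h1 : k ≤ j
        · simp [hmix, if_pos h1, if_pos (Nat.le_succ_of_le h1)]
        · by_cases h2 : k ≤ j + 1
          · have : k = j + 1 := by omega
            simp [hmix, this, hba]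
          · simp [hmix, if_neg h1, if_neg h2]
      rw [this]
      exact Relation.EqvGen.refl _
    -- main case
    have hjm : j + 1 < m := by
      rcases Nat.lt_or_ge (j+1) m with h | h
      · exact h
      · have : j + 1 = m := by omega
        exact absurd (this ▸ hm) hba
    set s : List X := listOf b j with hs
    set t : List X := (List.range' (j+2) (m - j - 1)).map a with ht
    have ht_cons : t = a (j+2) :: (List.range' (j+3) (m - j - 2)).map a := by
      rw [ht]
      have : m - j - 1 = (m - j - 2) + 1 := by omega
      rw [this, List.range'_succ]
      simp
    have ht_ne : t ≠ [] := by rw [ht_cons]; simp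
    have hdec1 : listOf (mix j) m = s ++ a (j+1) :: t := by
      rw [listOf_decomp (mix j) (show j < m by omega)]
      congr 1
      · apply listOf_congr
        intro k hk
        simp [hmix, if_pos hk]
      · have : m - j = (m - j - 1) + 1 := by omega
        rw [this, List.range'_succ, List.map_cons]
        congr 1
        · simp [hmix]
        · rw [ht]
          apply List.map_congr_left
          intro k hk
          have := List.mem_range'.1 hk
          have hk2 : ¬ k ≤ j := by omega
          simp [hmix, if_neg hk2]
    have hdec2 : listOf (mix (j+1)) m = (s ++ [b (j+1)]) ++ t := by
      rw [listOf_decomp (mix (j+1)) hjm]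
      congr 1
      · rw [listOf_succ]
        congr 1
        · apply listOf_congr
          intro k hk
          simp [hmix, if_pos (Nat.le_succ_of_le hk)]
        · simp [hmix]
      · have : m - (j+1) = m - j - 1 := by omega
        rw [this, ht]
        apply List.map_congr_left
        intro k hk
        have := List.mem_range'.1 hk
        have hk2 : ¬ k ≤ j + 1 := by omega
        simp [hmix, if_neg hk2]
    have hs_ne : s ≠ [] := listOf_ne_nil b j
    have hslast : s.getLast? = some (b j) := getLast?_listOf b j
    have chain_s : s.Chain' (fun u v => (u, v) ∈ E) :=
      chain'_listOf (fun k hk => hb k (by omega))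
    have chain1 : (s ++ a (j+1) :: t).Chain' (fun u v => (u, v) ∈ E) := by
      rw [← hdec1]; exact chain_mix j
    have chain_at : (a (j+1) :: t).Chain' (fun u v => (u, v) ∈ E) :=
      (List.isChain_append.1 chain1).2.1
    have chain2 : (s ++ b (j+1) :: a (j+1) :: t).Chain' (fun u v => (u, v) ∈ E) := by
      simp only [List.Chain']; rw [List.isChain_append]
      refine ⟨chain_s, ?_, ?_⟩
      · rw [List.isChain_cons_cons]
        exact ⟨hab (j+1) (by omega), chain_at⟩
      · intro u hu v hv
        rw [hslast] at hu
        simp at hu hv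
        rw [← hu, ← hv]
        exact hb j (by omega)
    have chain3 : ((s ++ [b (j+1)]) ++ t).Chain' (fun u v => (u, v) ∈ E) := by
      simp only [List.Chain']; rw [List.isChain_append]
      refine ⟨?_, List.IsChain.tail chain_at, ?_⟩
      · rw [← listOf_succ]
        exact chain'_listOf (fun k hk => hb k (by omega))
      · intro u hu v hv
        rw [← listOf_succ, getLast?_listOf] at hu
        rw [ht_cons] at hv
        simp at hu hv
        rw [← hu, ← hv]
        exact hd (j+1) hjm
    have move1 : ChainExt E (s ++ a (j+1) :: t) (s ++ b (j+1) :: a (j+1) :: t) := by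
      refine ⟨⟨s, a (j+1) :: t, b (j+1), rfl, rfl⟩, ?_, ?_, chain1, chain2⟩
      · rw [List.head?_append_of_ne_nil _ hs_ne, List.head?_append_of_ne_nil _ hs_ne]
      · rw [List.getLast?_append, List.getLast?_append, List.getLast?_cons_cons]
    have move2 : ChainExt E ((s ++ [b (j+1)]) ++ t) ((s ++ [b (j+1)]) ++ a (j+1) :: t) := by
      refine ⟨⟨s ++ [b (j+1)], t, a (j+1), rfl, rfl⟩, ?_, ?_, chain3, ?_⟩
      · have h2 : s ++ [b (j+1)] ≠ [] := by simp
        rw [List.head?_append_of_ne_nil _ h2, List.head?_append_of_ne_nil _ h2]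
      · simp [List.getLast?_append, getLast?_cons_of_ne_nil _ ht_ne]
      · rw [List.append_assoc]
        simpa using chain2
    rw [hdec1, hdec2]
    refine Relation.EqvGen.trans _ _ _ (Relation.EqvGen.rel _ _ move1) ?_
    have : s ++ b (j+1) :: a (j+1) :: t = (s ++ [b (j+1)]) ++ a (j+1) :: t := by
      simp
    rw [this]
    exact Relation.EqvGen.symm _ _ (Relation.EqvGen.rel _ _ move2)
  have main : ∀ j, j ≤ m → ChainHomotopic E (listOf (mix 0) m) (listOf (mix j) m) := by
    intro j
    induction j with
    | zero => intro _; exact Relation.EqvGen.refl _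
    | succ j ih =>
      intro hj
      exact Relation.EqvGen.trans _ _ _ (ih (by omega)) (step j (by omega))
  have e1 : listOf a m = listOf (mix 0) m := by
    apply listOf_congr
    intro k _
    by_cases h1 : k ≤ 0
    · have : k = 0 := by omega
      simp [hmix, this, h0]
    · simp [hmix, if_neg h1]
  have e2 : listOf (mix m) m = listOf b m := by
    apply listOf_congr
    intro k hk
    simp [hmix, if_pos hk]
  rw [e1, ← e2]
  exact main m le_rfl

lemma label_mono {ℓ : ℕ → ℕ} {m : ℕ}
    (hstep : ∀ k < m, ℓ (k+1) = ℓ k ∨ ℓ (k+1) = ℓ k + 1) :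
    ∀ j k, j ≤ k → k ≤ m → ℓ j ≤ ℓ k := by
  intro j k
  induction k with
  | zero =>
    intro hjk _
    have : j = 0 := by omega
    subst this; exact le_rfl
  | succ k ih =>
    intro hjk hkm
    rcases Nat.lt_or_ge j (k+1) with h | h
    · have h1 : ℓ j ≤ ℓ k := ih (by omega) (by omega)
      rcases hstep k (by omega) with h2 | h2 <;> omega
    · have : j = k + 1 := by omega
      subst this; exact le_rfl

lemma chain_label (hrefl : ∀ c : X, (c, c) ∈ E) {x : ℕ → X} {n : ℕ}
    (hx : ∀ k < n, (x k, x (k+1)) ∈ E) {ℓ : ℕ → ℕ} {m : ℕ}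
    (hstep : ∀ k < m, ℓ (k+1) = ℓ k ∨ ℓ (k+1) = ℓ k + 1)
    (hbound : ∀ k ≤ m, ℓ k ≤ n) :
    ∀ k < m, ((x ∘ ℓ) k, (x ∘ ℓ) (k+1)) ∈ E := by
  intro k hk
  rcases hstep k hk with h | h
  · simp only [Function.comp_apply, h]; exact hrefl _
  · simp only [Function.comp_apply, h]
    exact hx (ℓ k) (by have := hbound (k+1) (by omega); omega)

/-- Stretching a chain by repeating entries (along a monotone surjective reindexing with
steps 0 or 1) gives a chain-homotopic chain. -/
lemma stretch (hrefl : ∀ c : X, (c, c) ∈ E) (x : ℕ → X) (ℓ : ℕ → ℕ) (m : ℕ)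
    {n : ℕ} (hx : ∀ k < n, (x k, x (k+1)) ∈ E)
    (h0 : ℓ 0 = 0) (hmn : ℓ m = n)
    (hstep : ∀ k < m, ℓ (k+1) = ℓ k ∨ ℓ (k+1) = ℓ k + 1) :
    ChainHomotopic E (listOf x n) (listOf (x ∘ ℓ) m) := by
  induction m generalizing n with
  | zero =>
    have hn : n = 0 := by omega
    subst hn
    have : listOf x 0 = listOf (x ∘ ℓ) 0 := by
      rw [listOf_zero, listOf_zero]
      simp [h0]
    rw [this]; exact Relation.EqvGen.refl _
  | succ m ih =>
    have hbound : ∀ k ≤ m + 1, ℓ k ≤ n := by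
      intro k hk
      calc ℓ k ≤ ℓ (m+1) := label_mono hstep k (m+1) hk le_rfl
        _ = n := hmn
    have hchainl : ∀ k < m + 1, ((x ∘ ℓ) k, (x ∘ ℓ) (k+1)) ∈ E :=
      chain_label hrefl hx hstep hbound
    rcases hstep m (by omega) with h | h
    · -- last step repeats: insert a duplicate at the end
      have hmn' : ℓ m = n := by omega
      have hh := ih (fun k hk => hx k hk) hmn' (fun k hk => hstep k (by omega))
      refine Relation.EqvGen.trans _ _ _ hh ?_
      apply Relation.EqvGen.rel
      refine ⟨⟨listOf (x ∘ ℓ) m, [], x (ℓ (m+1)), by simp, by rw [listOf_succ]; rfl⟩,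
        ?_, ?_, ?_, ?_⟩
      · rw [listOf_succ, List.head?_append_of_ne_nil _ (listOf_ne_nil _ _)]
      · rw [listOf_succ, List.getLast?_append, getLast?_listOf]
        simp [Function.comp, h]
      · exact chain'_listOf (fun k hk => hchainl k (by omega))
      · exact chain'_listOf hchainl
    · -- last step moves forward
      have hn : n = ℓ m + 1 := by omega
      have hh := ih (n := ℓ m) (fun k hk => hx k (by omega)) rfl
        (fun k hk => hstep k (by omega))
      have happ := hom_append_right hh (x (ℓ m)) (x n) (getLast?_listOf x (ℓ m))
        (by rw [hn]; exact hx (ℓ m) (by omega))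
      have e1 : listOf x n = listOf x (ℓ m) ++ [x n] := by
        rw [hn, listOf_succ]
      have e2 : listOf (x ∘ ℓ) (m+1) = listOf (x ∘ ℓ) m ++ [x n] := by
        rw [listOf_succ]
        simp [Function.comp, h, hn]
      rw [e1, e2]
      exact happ

lemma contract (hrefl : ∀ c : X, (c, c) ∈ E) (p : X) (m : ℕ) :
    ChainHomotopic E (listOf (fun _ => p) m) [p] := by
  induction m with
  | zero => exact Relation.EqvGen.refl _
  | succ m ih =>
    refine Relation.EqvGen.trans _ _ _ ?_ ih
    apply Relation.EqvGen.symm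
    apply Relation.EqvGen.rel
    refine ⟨⟨listOf (fun _ => p) m, [], p, by simp, by rw [listOf_succ]⟩, ?_, ?_, ?_, ?_⟩
    · rw [listOf_succ, List.head?_append_of_ne_nil _ (listOf_ne_nil _ _)]
    · rw [listOf_succ, List.getLast?_append, getLast?_listOf]
      simp
    · exact chain'_listOf (fun k _ => hrefl p)
    · exact chain'_listOf (fun k _ => hrefl p)

lemma mono_of_lt_succ {τ : ℕ → ℝ} {n : ℕ} (h : ∀ i < n, τ i < τ (i+1)) :
    ∀ j k, j ≤ k → k ≤ n → τ j ≤ τ k := by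
  intro j k
  induction k with
  | zero =>
    intro hjk _
    have : j = 0 := by omega
    subst this; exact le_rfl
  | succ k ih =>
    intro hjk hkm
    rcases Nat.lt_or_ge j (k+1) with hlt | hge
    · have h1 : τ j ≤ τ k := ih (by omega) (by omega)
      have h2 : τ k < τ (k+1) := h k (by omega)
      linarith
    · have : j = k + 1 := by omega
      subst this; exact le_rfl

/-- Construct a path through the points of an `E`-chain, staying in the corresponding
balls, with a (strictly increasing) sequence of break times. -/
lemma exists_path_along {Y : Type u} [UniformSpace Y] {E : Set (Y × Y)}
    (hrefl : ∀ c : Y, (c, c) ∈ E)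
    (hball : ∀ a : Y, IsPathConnected (ball a E))
    (x : ℕ → Y) (n : ℕ) (hn : 1 ≤ n) (hx : ∀ i < n, (x i, x (i+1)) ∈ E) :
    ∃ (c : Path (x 0) (x n)) (τ : ℕ → ℝ),
      τ 0 = 0 ∧ τ n = 1 ∧ (∀ i < n, τ i < τ (i+1)) ∧
      (∀ i ≤ n, c.extend (τ i) = x i) ∧
      (∀ i < n, ∀ t ∈ Set.Icc (τ i) (τ (i+1)), c.extend t ∈ ball (x i) E) := by
  induction n, hn using Nat.le_induction with
  | base =>
    have hj : JoinedIn (ball (x 0) E) (x 0) (x 1) :=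
      (hball (x 0)).joinedIn (x 0) (hrefl (x 0)) (x 1) (hx 0 (by omega))
    obtain ⟨γ, hγ⟩ := hj
    refine ⟨γ, fun i => if i = 0 then 0 else 1, by simp, by simp, ?_, ?_, ?_⟩
    · intro i hi
      have : i = 0 := by omega
      subst this; norm_num
    · intro i hi
      rcases Nat.eq_zero_or_pos i with h | h
      · subst h; simp
      · have : i = 1 := by omega
        subst this; simp
    · intro i hi t ht
      have : i = 0 := by omega
      subst this
      simp only [if_pos rfl, if_neg one_ne_zero] at ht
      rw [Path.extend_apply γ ht]
      exact hγ _
  | succ n hn ih =>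
    obtain ⟨c', τ', h0', h1', hstrict', hval', hseg'⟩ := ih (fun i hi => hx i (by omega))
    have hτ'mono := mono_of_lt_succ hstrict'
    have hτ'mem : ∀ i ≤ n, τ' i ∈ Set.Icc (0:ℝ) 1 := by
      intro i hi
      constructor
      · rw [← h0']; exact hτ'mono 0 i (by omega) hi
      · rw [← h1']; exact hτ'mono i n hi le_rfl
    have hjq : JoinedIn (ball (x n) E) (x n) (x (n+1)) :=
      (hball (x n)).joinedIn (x n) (hrefl (x n)) (x (n+1)) (hx n (by omega))
    obtain ⟨q, hq⟩ := hjq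
    set c : Path (x 0) (x (n+1)) := c'.trans q with hc
    have hev1 : ∀ t : ℝ, t ∈ Set.Icc (0:ℝ) 1 → t ≤ 1/2 → c.extend t = c'.extend (2*t) := by
      intro t ht hle
      rw [Path.extend_apply c ht, hc, Path.trans_apply]
      rw [dif_pos (by exact_mod_cast hle)]
      rw [Path.extend_apply c' (by constructor <;> [linarith [ht.1]; linarith])]
    have hev2 : ∀ t : ℝ, t ∈ Set.Icc (0:ℝ) 1 → ¬(t ≤ 1/2) → c.extend t = q.extend (2*t - 1) := by
      intro t ht hle
      rw [Path.extend_apply c ht, hc, Path.trans_apply]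
      rw [dif_neg (by exact_mod_cast hle)]
      rw [Path.extend_apply q (by constructor <;> [linarith [not_le.1 hle]; linarith [ht.2]])]
    refine ⟨c, fun i => if i ≤ n then τ' i / 2 else 1, ?_, ?_, ?_, ?_, ?_⟩
    · simp [h0']
    · simp
    · intro i hi
      dsimp only
      rcases Nat.lt_or_ge i n with h | h
      · rw [if_pos (by omega), if_pos (by omega)]
        have := hstrict' i h
        linarith
      · have : i = n := by omega
        subst this
        rw [if_pos le_rfl, if_neg (by omega), h1']
        norm_num
    · intro i hi
      dsimp only
      by_cases h : i ≤ n
      · rw [if_pos h]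
        have hm := hτ'mem i h
        have ht2 : τ' i / 2 ∈ Set.Icc (0:ℝ) 1 := by
          constructor <;> [linarith [hm.1]; linarith [hm.2]]
        rw [hev1 _ ht2 (by linarith [hm.2])]
        have : 2 * (τ' i / 2) = τ' i := by ring
        rw [this]
        exact hval' i h
      · have : i = n + 1 := by omega
        subst this
        rw [if_neg h]
        exact Path.extend_one c
    · intro i hi t ht
      dsimp only at ht ⊢
      by_cases h : i < n
      · rw [if_pos (by omega), if_pos (by omega)] at ht
        have hmi := hτ'mem i (by omega)
        have hmi1 := hτ'mem (i+1) (by omega)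
        have ht2 : t ∈ Set.Icc (0:ℝ) 1 := by
          constructor <;> [linarith [ht.1, hmi.1]; linarith [ht.2, hmi1.2]]
        rw [hev1 _ ht2 (by linarith [ht.2, hmi1.2])]
        exact hseg' i h (2*t) (Set.mem_Icc.2 ⟨by linarith [ht.1], by linarith [ht.2]⟩)
      · have : i = n := by omega
        subst this
        rw [if_pos le_rfl, if_neg (by omega), h1'] at ht
        have ht2 : t ∈ Set.Icc (0:ℝ) 1 := by
          constructor <;> [linarith [ht.1]; exact ht.2]
        by_cases hle : t ≤ 1/2
        · have : t = 1/2 := by linarith [ht.1]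
          subst this
          rw [hev1 _ ht2 hle]
          have : 2 * (1/2 : ℝ) = 1 := by norm_num
          rw [this, Path.extend_one]
          exact hrefl _
        · rw [hev2 _ ht2 hle]
          rw [Path.extend_apply q (Set.mem_Icc.2 ⟨by linarith [not_le.1 hle], by linarith [ht2.2]⟩)]
          exact hq _

lemma chain'_listOf_iff {f : ℕ → X} {m : ℕ} :
    (listOf f m).Chain' (fun a b => (a, b) ∈ E) ↔ ∀ k < m, (f k, f (k+1)) ∈ E := by
  rw [listOf]; simp only [List.Chain']; rw [List.isChain_map]
  exact List.isChain_range_succ _ m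

end ChainProof


open ChainProof in
/-- (Statement 15) Let `X` be a connected, simply connected (every loop is null-homotopic),
uniformly locally pathwise connected uniform space.  Then for every symmetric entourage `E`
whose balls are all open and path connected, every `E`-loop in `X` is `E`-homotopic to the
trivial one-point chain at its basepoint. -/
theorem eLoop_nullHomotopic_of_simplyConnected {X : Type u} [UniformSpace X]
    [ConnectedSpace X]
    (hsc : ∀ (x : X) (c : Path x x), c.Homotopic (Path.refl x))
    (hulpc : ∀ D ∈ uniformity X, ∃ F ∈ uniformity X, SymmetricRel F ∧ F ⊆ D ∧
      ∀ x : X, IsOpen (ball x F) ∧ IsPathConnected (ball x F)) :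
    ∀ E ∈ uniformity X, SymmetricRel E →
      (∀ x : X, IsOpen (ball x E) ∧ IsPathConnected (ball x E)) →
      ∀ (γ : List X) (p : X), IsChainList E γ → γ.head? = some p → γ.getLast? = some p →
        ChainHomotopic E γ [p] := by
  classical
  intro E hE hsymmE hballs γ p hchain hhead hlast
  obtain ⟨hne, hchain'⟩ := hchain
  have hrefl : ∀ c : X, (c, c) ∈ E := fun c => refl_mem_uniformity hE
  have hsymm : ∀ {a b : X}, (a, b) ∈ E → (b, a) ∈ E :=
    fun h => by rw [← hsymmE]; exact h
  -- represent γ as `listOf x n`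
  set n : ℕ := γ.length - 1 with hn
  have hlen : γ.length = n + 1 := by
    have : γ.length ≠ 0 := by simpa using hne
    omega
  set x : ℕ → X := fun k => γ.getD k p with hxdef
  have hγeq : γ = listOf x n := by
    apply List.ext_getElem
    · simp [listOf, hlen]
    · intro i h1 h2
      simp only [listOf, List.getElem_map, List.getElem_range]
      exact (List.getD_eq_getElem γ p h1).symm
  have hx0 : x 0 = p := by
    have := hhead
    rw [hγeq, head?_listOf] at this
    exact Option.some_injective _ this
  have hxn : x n = p := by
    have := hlast
    rw [hγeq, getLast?_listOf] at this
    exact Option.some_injective _ this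
  have hxc : ∀ k < n, (x k, x (k+1)) ∈ E := by
    rw [hγeq] at hchain'
    exact chain'_listOf_iff.1 hchain'
  rcases Nat.eq_zero_or_pos n with hn0 | hn1
  · rw [hγeq, hn0, listOf_zero, hx0]
    exact Relation.EqvGen.refl _
  -- build the path
  obtain ⟨c0, τ, hτ0, hτn, hstrict, hval, hseg⟩ :=
    exists_path_along hrefl (fun a => (hballs a).2) x n hn1 hxc
  have hτmono := ChainProof.mono_of_lt_succ hstrict
  set c : Path p p := c0.cast hx0.symm hxn.symm with hcdef
  have hcc : ∀ t, c t = c0 t := fun t => by rw [hcdef, Path.cast_coe]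
  have hcext : ∀ t : ℝ, t ∈ Set.Icc (0:ℝ) 1 → c.extend t = c0.extend t := by
    intro t ht
    rw [Path.extend_apply c ht, Path.extend_apply c0 ht, hcc]
  obtain ⟨H⟩ := hsc p c
  set f : C(↥unitInterval × ↥unitInterval, X) := H.toHomotopy.toContinuousMap with hfdef
  have hfH : ∀ q : ↥unitInterval × ↥unitInterval, f q = H q := fun q => rfl
  -- entourage F with F ∘ F ⊆ E
  obtain ⟨F0, hF0, hF0c⟩ := comp_mem_uniformity_sets hE
  set F : Set (X × X) := F0 ∩ E with hFdef
  have hF : F ∈ uniformity X := Filter.inter_mem hF0 hE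
  have hFE : F ⊆ E := Set.inter_subset_right
  have hFF : ∀ a b d : X, (a, b) ∈ F → (b, d) ∈ F → (a, d) ∈ E :=
    fun a b d h1 h2 => hF0c (SetRel.mem_comp.2 ⟨b, h1.1, h2.1⟩)
  -- uniform continuity of the homotopy
  have hHuc : UniformContinuous f := CompactSpace.uniformContinuous_of_continuous f.continuous
  have h1 := Filter.mem_map.1 (hHuc hF)
  rw [Metric.mem_uniformity_dist] at h1
  obtain ⟨ε, hε, hεF⟩ := h1
  -- δ for the breakpoints
  have hδ : ∀ i : ℕ, ∃ δ : ℝ, 0 < δ ∧ (1 ≤ i → i ≤ n → ∀ t : ℝ, |t - τ i| < δ →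
      c0.extend t ∈ ball (x i) E) := by
    intro i
    by_cases hi : 1 ≤ i ∧ i ≤ n
    · have hopen : IsOpen (ball (x i) E) := (hballs (x i)).1
      have hmem : c0.extend (τ i) ∈ ball (x i) E := by
        rw [hval i hi.2]; exact hrefl _
      have hnh := Filter.mem_map.1 ((c0.continuous_extend.tendsto (τ i)) (hopen.mem_nhds hmem))
      rw [Metric.mem_nhds_iff] at hnh
      obtain ⟨δ, hδpos, hδsub⟩ := hnh
      refine ⟨δ, hδpos, fun _ _ t ht => hδsub ?_⟩
      rw [Metric.mem_ball, Real.dist_eq]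
      exact ht
    · exact ⟨1, one_pos, fun h1 h2 _ _ => absurd ⟨h1, h2⟩ hi⟩
  choose δf hδpos hδprop using hδ
  have hIcc_ne : (Finset.Icc 1 n).Nonempty := ⟨1, by simp; omega⟩
  set δ : ℝ := (Finset.Icc 1 n).inf' hIcc_ne δf with hδdef
  have hδ0 : 0 < δ := (Finset.lt_inf'_iff hIcc_ne).2 fun i _ => hδpos i
  -- minimal gap between breakpoints
  have hrange_ne : (Finset.range n).Nonempty := ⟨0, by simp [hn1]⟩
  set gap : ℝ := (Finset.range n).inf' hrange_ne (fun i => τ (i+1) - τ i) with hgapdef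
  have hgap0 : 0 < gap := (Finset.lt_inf'_iff hrange_ne).2 fun i hi => by
    have := hstrict i (Finset.mem_range.1 hi); linarith
  -- choose the mesh m
  set r : ℝ := min ε (min δ gap) with hrdef
  have hr0 : 0 < r := lt_min hε (lt_min hδ0 hgap0)
  obtain ⟨m, hm⟩ := exists_nat_gt (1 / r)
  have hm0 : 0 < m := by
    by_contra h
    have : m = 0 := by omega
    rw [this] at hm
    simp only [Nat.cast_zero] at hm
    have : 0 < 1 / r := by positivity
    linarith
  have hmR : (0:ℝ) < (m:ℝ) := by exact_mod_cast hm0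
  have hmr : 1 / (m:ℝ) < r := by
    rw [div_lt_iff₀ hmR]
    calc (1:ℝ) = r * (1/r) := by field_simp
    _ < r * m := by
        apply mul_lt_mul_of_pos_left hm hr0
  have hmε : 1 / (m:ℝ) < ε := lt_of_lt_of_le hmr (min_le_left _ _)
  have hmδ : 1 / (m:ℝ) < δ := lt_of_lt_of_le hmr ((min_le_right _ _).trans (min_le_left _ _))
  have hmgap : 1 / (m:ℝ) < gap := lt_of_lt_of_le hmr ((min_le_right _ _).trans (min_le_right _ _))
  -- the grid
  set u : ℕ → ↥unitInterval := fun k => Set.projIcc 0 1 zero_le_one ((k:ℝ)/m) with hudef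
  have humem : ∀ k, k ≤ m → ((k:ℝ)/m) ∈ Set.Icc (0:ℝ) 1 := by
    intro k hk
    constructor
    · positivity
    · rw [div_le_one hmR]; exact_mod_cast hk
  have hu : ∀ k, k ≤ m → ((u k : ℝ)) = (k:ℝ)/m := by
    intro k hk
    rw [hudef]
    simp only
    rw [Set.projIcc_of_mem _ (humem k hk)]
  have hu0 : u 0 = 0 := by
    apply Subtype.ext
    rw [hu 0 (by omega)]
    simp
  have hum : u m = 1 := by
    apply Subtype.ext
    rw [hu m le_rfl]
    field_simp
    simp
  -- close grid points are F-close
  have hF_pt : ∀ j k j' k' : ℕ, j ≤ m → k ≤ m → j' ≤ m → k' ≤ m →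
      |(j:ℝ) - j'| ≤ 1 → |(k:ℝ) - k'| ≤ 1 → (f (u j, u k), f (u j', u k')) ∈ F := by
    intro j k j' k' hj hk hj' hk' hjj hkk
    apply hεF
    rw [Prod.dist_eq]
    apply max_lt
    · rw [Subtype.dist_eq, hu j hj, hu j' hj', Real.dist_eq]
      have e : (j:ℝ)/m - j'/m = ((j:ℝ) - j')/m := by ring
      rw [e, abs_div, abs_of_pos hmR]
      calc |(j:ℝ) - j'| / m ≤ 1 / m := (div_le_div_iff_of_pos_right hmR).mpr hjj
        _ < ε := hmε
    · rw [Subtype.dist_eq, hu k hk, hu k' hk', Real.dist_eq]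
      have e : (k:ℝ)/m - k'/m = ((k:ℝ) - k')/m := by ring
      rw [e, abs_div, abs_of_pos hmR]
      calc |(k:ℝ) - k'| / m ≤ 1 / m := (div_le_div_iff_of_pos_right hmR).mpr hkk
        _ < ε := hmε
  -- absolute value helpers
  have habs0 : ∀ k : ℕ, |(k:ℝ) - (k:ℝ)| ≤ 1 := by intro k; simp
  have habs1 : ∀ k : ℕ, |(k:ℝ) - ((k+1:ℕ):ℝ)| ≤ 1 := by
    intro k; push_cast
    rw [show (k:ℝ) - ((k:ℝ)+1) = -1 by ring]
    simp
  have habs1' : ∀ k : ℕ, |((k+1:ℕ):ℝ) - (k:ℝ)| ≤ 1 := by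
    intro k; push_cast
    rw [show ((k:ℝ)+1) - (k:ℝ) = 1 by ring]
    simp
  -- the labeling
  set P : ℕ → ℕ → Prop := fun k i => τ i ≤ (k:ℝ)/m with hPdef
  set ℓ : ℕ → ℕ := fun k => Nat.findGreatest (P k) n with hℓdef
  have hℓub : ∀ k, ℓ k ≤ n := fun k => Nat.findGreatest_le n
  have hτℓ : ∀ k : ℕ, τ (ℓ k) ≤ (k:ℝ)/m := by
    intro k
    have h0 : P k 0 := by
      rw [hPdef]; simp only; rw [hτ0]; positivity
    exact Nat.findGreatest_spec (Nat.zero_le n) h0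
  have hgt : ∀ k : ℕ, ℓ k < n → (k:ℝ)/m < τ (ℓ k + 1) := by
    intro k hk
    have heq : ℓ k = Nat.findGreatest (P k) n := rfl
    have h2 : ¬ P k (ℓ k + 1) :=
      Nat.findGreatest_is_greatest (n := n) (by omega) (by omega)
    exact not_le.1 h2
  have hℓ0 : ℓ 0 = 0 := by
    rw [hℓdef]; simp only
    rw [Nat.findGreatest_eq_zero_iff]
    intro i hi0 hin hP
    have hlt : τ 0 < τ i := by
      have h1 : τ 0 < τ 1 := hstrict 0 hn1
      have h2 : τ 1 ≤ τ i := hτmono 1 i hi0 hin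
      linarith
    rw [hτ0] at hlt
    rw [hPdef] at hP
    simp only [Nat.cast_zero, zero_div] at hP
    linarith
  have hℓm : ℓ m = n := by
    apply le_antisymm (hℓub m)
    apply Nat.le_findGreatest le_rfl
    rw [hPdef]; simp only
    rw [hτn, div_self (ne_of_gt hmR)]
  have hℓmono : ∀ k k' : ℕ, k ≤ k' → ℓ k ≤ ℓ k' := by
    intro k k' hkk
    apply Nat.findGreatest_mono ?_ le_rfl
    intro i hi
    refine le_trans hi ?_
    refine (div_le_div_iff_of_pos_right hmR).mpr ?_
    exact_mod_cast hkk
  have hstepℓ : ∀ k < m, ℓ (k+1) = ℓ k ∨ ℓ (k+1) = ℓ k + 1 := by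
    intro k hk
    by_contra hcon
    push_neg at hcon
    have hle : ℓ k ≤ ℓ (k+1) := hℓmono k (k+1) (by omega)
    have h2 : ℓ k + 2 ≤ ℓ (k+1) := by omega
    have hub := hℓub (k+1)
    have hi_n : ℓ k + 1 < n := by omega
    have g1 : (k:ℝ)/m < τ (ℓ k + 1) := hgt k (by omega)
    have g2 : τ (ℓ (k+1)) ≤ ((k+1:ℕ):ℝ)/m := hτℓ (k+1)
    have g3 : τ (ℓ k + 2) ≤ τ (ℓ (k+1)) := hτmono _ _ h2 hub
    have g4 : gap ≤ τ (ℓ k + 2) - τ (ℓ k + 1) :=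
      Finset.inf'_le _ (Finset.mem_range.2 hi_n)
    have hc : ((k+1:ℕ):ℝ) = (k:ℝ)+1 := by push_cast; ring
    rw [hc] at g2
    have g5 : ((k:ℝ)+1)/m = (k:ℝ)/m + 1/m := by ring
    linarith [hmgap]
  have hbound : ∀ k ≤ m, ℓ k ≤ n := fun k _ => hℓub k
  -- membership of samples in balls
  have hmemb : ∀ k : ℕ, k ≤ m → c0.extend ((k:ℝ)/m) ∈ ball (x (ℓ k)) E := by
    intro k hk
    rcases Nat.lt_or_ge (ℓ k) n with h | h
    · exact hseg (ℓ k) h ((k:ℝ)/m) ⟨hτℓ k, le_of_lt (hgt k h)⟩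
    · have hln : ℓ k = n := le_antisymm (hℓub k) h
      have h1 : (1:ℝ) ≤ (k:ℝ)/m := by
        have := hτℓ k
        rw [hln, hτn] at this
        exact this
      have h2 : (k:ℝ)/m ≤ 1 := (humem k hk).2
      have heq : (k:ℝ)/m = 1 := le_antisymm h2 h1
      rw [heq, hln, show c0.extend 1 = x n from Path.extend_one c0]
      exact hrefl _
  have hjump : ∀ k : ℕ, k < m → ℓ (k+1) = ℓ k + 1 →
      c0.extend ((k:ℝ)/m) ∈ ball (x (ℓ (k+1))) E := by
    intro k hk hj
    have h1n : 1 ≤ ℓ (k+1) := by omega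
    have hn2 : ℓ (k+1) ≤ n := hℓub _
    apply hδprop (ℓ (k+1)) h1n hn2
    have g1 : (k:ℝ)/m < τ (ℓ (k+1)) := by rw [hj]; exact hgt k (by omega)
    have g2 : τ (ℓ (k+1)) ≤ ((k+1:ℕ):ℝ)/m := hτℓ (k+1)
    have hc : ((k+1:ℕ):ℝ) = (k:ℝ)+1 := by push_cast; ring
    rw [hc] at g2
    have g5 : ((k:ℝ)+1)/m = (k:ℝ)/m + 1/m := by ring
    have habs : |(k:ℝ)/m - τ (ℓ (k+1))| ≤ 1/m := by
      rw [abs_sub_le_iff]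
      constructor
      · linarith [one_div_pos.mpr hmR]
      · linarith
    have hδf : δ ≤ δf (ℓ (k+1)) := Finset.inf'_le δf (Finset.mem_Icc.2 ⟨h1n, hn2⟩)
    linarith [hmδ]
  -- grid rows
  set row : ℕ → ℕ → X := fun j k => f (u j, u k) with hrowdef
  have hrow0 : ∀ k : ℕ, k ≤ m → row 0 k = c0.extend ((k:ℝ)/m) := by
    intro k hk
    rw [hrowdef]; simp only
    rw [hu0, hfH, H.apply_zero]
    show c (u k) = _
    rw [hcc, Path.extend_apply c0 (humem k hk)]
    congr 1
    exact Subtype.ext (hu k hk)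
  have hrow_top : ∀ k : ℕ, row m k = p := by
    intro k
    rw [hrowdef]; simp only
    rw [hum, hfH, H.apply_one]
    rfl
  have hrow_left : ∀ j : ℕ, row j 0 = p := by
    intro j
    rw [hrowdef]; simp only
    rw [hu0, hfH, H.eq_fst (u j) (by simp)]
    exact c.source
  have hrow_right : ∀ j : ℕ, row j m = p := by
    intro j
    rw [hrowdef]; simp only
    rw [hum, hfH, H.eq_fst (u j) (by simp)]
    exact c.target
  -- assembling the chain homotopies
  have hom0 : ChainHomotopic E (listOf x n) (listOf (x ∘ ℓ) m) :=
    stretch hrefl x ℓ m hxc hℓ0 hℓm hstepℓ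
  have hom1 : ChainHomotopic E (listOf (x ∘ ℓ) m) (listOf (row 0) m) := by
    apply ladder (x ∘ ℓ) (row 0) m
    · exact chain_label hrefl hxc hstepℓ hbound
    · intro k hk
      exact hFE (hF_pt 0 k 0 (k+1) (by omega) (by omega) (by omega) (by omega)
        (habs0 0) (habs1 k))
    · intro k hk
      rw [hrow0 k hk]
      exact hsymm (hmemb k hk)
    · intro k hk
      simp only [Function.comp_apply]
      rcases hstepℓ k hk with h | h
      · rw [h, hrow0 k (by omega)]
        exact hsymm (hmemb k (by omega))
      · rw [hrow0 k (by omega)]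
        exact hsymm (hjump k hk h)
    · simp only [Function.comp_apply]
      rw [hℓ0, hx0]
      exact (hrow_left 0).symm
    · simp only [Function.comp_apply]
      rw [hℓm, hxn]
      exact (hrow_right 0).symm
  have hrowchain : ∀ j, j ≤ m → ∀ k, k < m → (row j k, row j (k+1)) ∈ E := fun j hj k hk =>
    hFE (hF_pt j k j (k+1) hj (by omega) hj (by omega) (habs0 j) (habs1 k))
  have hom2 : ∀ j ≤ m, ChainHomotopic E (listOf (row 0) m) (listOf (row j) m) := by
    intro j
    induction j with
    | zero => intro _; exact Relation.EqvGen.refl _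
    | succ j ih =>
      intro hj
      refine Relation.EqvGen.trans _ _ _ (ih (by omega)) ?_
      apply ladder (row j) (row (j+1)) m
      · exact hrowchain j (by omega)
      · exact hrowchain (j+1) hj
      · intro k hk
        exact hFE (hF_pt (j+1) k j k hj (by omega) (by omega) (by omega)
          (habs1' j) (habs0 k))
      · intro k hk
        exact hFF _ _ _
          (hF_pt (j+1) k j k hj (by omega) (by omega) (by omega) (habs1' j) (habs0 k))
          (hF_pt j k j (k+1) (by omega) (by omega) (by omega) (by omega) (habs0 j) (habs1 k))
      · rw [hrow_left j, hrow_left (j+1)]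
      · rw [hrow_right j, hrow_right (j+1)]
  have hom2' := hom2 m le_rfl
  have homtop : listOf (row m) m = listOf (fun _ => p) m :=
    listOf_congr (fun k _ => hrow_top k)
  rw [homtop] at hom2'
  have hom3 : ChainHomotopic E (listOf (fun _ => p) m) [p] := contract hrefl p m
  rw [hγeq]
  exact Relation.EqvGen.trans _ _ _ hom0 (Relation.EqvGen.trans _ _ _ hom1
    (Relation.EqvGen.trans _ _ _ hom2' hom3))
end

section
/- Let G be a group acting on a uniform space X by uniform homeomorphisms, let E be a symmetric G-invariant entourage ((x,y) ∈ E iff (g·x, g·y) ∈ E for all g ∈ G), and let D be an entourage with E∘E∘E ⊆ D such that whenever (g·x, x) ∈ D for some x ∈ X and g ∈ G, then g is the identity. Let q : X → X/G be the quotient map onto the set of G-orbits and F := (q × q)(E) ⊆ (X/G) × (X/G). If γ = (x₀, x₁, …, xₙ) is an E-chain in X with xₙ = g·x₀ for some g ∈ G, and the F-loop q(γ) = (q(x₀), …, q(xₙ)) is F-homotopic to the trivial one-point chain (q(x₀)), then g is the identity (so γ is an E-loop) and γ is E-homotopic to the trivial one-point chain (x₀). -/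
universe u u'

section DeckAux

set_option linter.unusedSectionVars false

variable {G : Type u'} {X : Type u} [Group G] [UniformSpace X] [MulAction G X]
variable {E D : Set (X × X)}
variable {q : X → Quotient (MulAction.orbitRel G X)}
variable {F : Set (Quotient (MulAction.orbitRel G X) × Quotient (MulAction.orbitRel G X))}

private lemma deck.qeq (hq : ∀ x : X, q x = Quotient.mk (MulAction.orbitRel G X) x)
    {x y : X} (h : q x = q y) : ∃ g : G, g • y = x := by
  rw [hq, hq] at h
  have h2 : (MulAction.orbitRel G X).r x y := Quotient.exact h
  rw [MulAction.orbitRel_apply] at h2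
  exact h2

private lemma deck.qsmul (hq : ∀ x : X, q x = Quotient.mk (MulAction.orbitRel G X) x)
    (g : G) (x : X) : q (g • x) = q x := by
  rw [hq, hq]
  exact Quotient.sound (show (MulAction.orbitRel G X).r _ _ by
    rw [MulAction.orbitRel_apply]; exact MulAction.mem_orbit x g)

/-- One step of chain lifting. -/
private lemma deck.step (hq : ∀ x : X, q x = Quotient.mk (MulAction.orbitRel G X) x)
    (hEinv : ∀ (g : G) (x y : X), (x, y) ∈ E ↔ (g • x, g • y) ∈ E)
    (hFmem : ∀ a b, (a, b) ∈ F → ∃ u v : X, (u, v) ∈ E ∧ q u = a ∧ q v = b)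
    {u : X} {a b : Quotient (MulAction.orbitRel G X)} (hu : q u = a) (hab : (a, b) ∈ F) :
    ∃ v : X, (u, v) ∈ E ∧ q v = b := by
  obtain ⟨u₀, v₀, hEuv, hqu, hqv⟩ := hFmem a b hab
  obtain ⟨h, hh⟩ := deck.qeq hq (show q u = q u₀ by rw [hu, hqu])
  refine ⟨h • v₀, ?_, ?_⟩
  · rw [← hh]; exact (hEinv h u₀ v₀).mp hEuv
  · rw [deck.qsmul hq]; exact hqv

/-- Existence of lifts of `F`-chains. -/
private lemma deck.lift_exists (hq : ∀ x : X, q x = Quotient.mk (MulAction.orbitRel G X) x)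
    (hEinv : ∀ (g : G) (x y : X), (x, y) ∈ E ↔ (g • x, g • y) ∈ E)
    (hFmem : ∀ a b, (a, b) ∈ F → ∃ u v : X, (u, v) ∈ E ∧ q u = a ∧ q v = b) :
    ∀ (c : List (Quotient (MulAction.orbitRel G X))) (x : X),
      c.Chain' (fun a b => (a, b) ∈ F) → c.head? = some (q x) →
      ∃ l : List X, l.map q = c ∧ l.Chain' (fun a b => (a, b) ∈ E) ∧ l.head? = some x := by
  intro c
  induction c with
  | nil => intro x _ h; simp at h
  | cons a c ih =>
    intro x hc hh
    have ha : a = q x := by simpa using hh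
    cases c with
    | nil => exact ⟨[x], by simp [ha], List.isChain_singleton x, rfl⟩
    | cons b c' =>
      have hab : (a, b) ∈ F := (List.isChain_cons_cons.mp hc).1
      obtain ⟨v, huv, hqv⟩ := deck.step hq hEinv hFmem ha.symm hab
      obtain ⟨l, hmap, hch, hhd⟩ := ih v (List.isChain_cons_cons.mp hc).2 (by simp [hqv])
      refine ⟨x :: l, by simp [hmap, ha], ?_, rfl⟩
      unfold List.Chain'; rw [List.isChain_cons]
      refine ⟨fun y hy => ?_, hch⟩
      rw [hhd] at hy
      simp only [Option.mem_def, Option.some.injEq] at hy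
      rwa [hy] at huv

/-- Uniqueness of lifts. -/
private lemma deck.lift_unique (hE : E ∈ uniformity X) (hEsym : Prod.swap ⁻¹' E = E)
    (hED : SetRel.comp (SetRel.comp E E) E ⊆ D)
    (hDfree : ∀ (g : G) (x : X), (g • x, x) ∈ D → g = 1)
    (hq : ∀ x : X, q x = Quotient.mk (MulAction.orbitRel G X) x) :
    ∀ (l l' : List X), l.Chain' (fun a b => (a, b) ∈ E) →
      l'.Chain' (fun a b => (a, b) ∈ E) → l.map q = l'.map q → l.head? = l'.head? →
      l = l' := by
  intro l
  induction l with
  | nil =>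
    intro l' _ _ hm _
    cases l' with
    | nil => rfl
    | cons a r => simp at hm
  | cons x r ih =>
    intro l' hc hc' hm hh
    cases l' with
    | nil => simp at hm
    | cons x' r' =>
      have hx : x = x' := by simpa using hh
      subst hx
      cases r with
      | nil =>
        cases r' with
        | nil => rfl
        | cons a' r'' => simp at hm
      | cons a r₁ =>
        cases r' with
        | nil => simp at hm
        | cons a' r₁' =>
          have hqa : q a = q a' := by
            have := hm
            simp only [List.map_cons, List.cons.injEq] at this
            exact this.2.1
          have hxa : (x, a) ∈ E := (List.isChain_cons_cons.mp hc).1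
          have hxa' : (x, a') ∈ E := (List.isChain_cons_cons.mp hc').1
          obtain ⟨h, hh2⟩ := deck.qeq hq hqa
          have hda : (a, a') ∈ D :=
            hED ⟨x, ⟨x, (by rw [← hEsym]; exact hxa), refl_mem_uniformity hE⟩, hxa'⟩
          have h1 : h = 1 := hDfree h a' (by rw [hh2]; exact hda)
          have haa : a = a' := by rw [← hh2, h1, one_smul]
          subst haa
          have htail : a :: r₁ = a :: r₁' := by
            refine ih (a :: r₁') (List.isChain_cons_cons.mp hc).2 (List.isChain_cons_cons.mp hc').2 ?_ rfl
            simpa using hm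
          rw [htail]

/-- The key construction: an elementary `F`-extension of the projection of an `E`-chain
lifts to an elementary `E`-extension. -/
private lemma deck.lift_ext (hE : E ∈ uniformity X) (hEsym : Prod.swap ⁻¹' E = E)
    (hEinv : ∀ (g : G) (x y : X), (x, y) ∈ E ↔ (g • x, g • y) ∈ E)
    (hED : SetRel.comp (SetRel.comp E E) E ⊆ D)
    (hDfree : ∀ (g : G) (x : X), (g • x, x) ∈ D → g = 1)
    (hq : ∀ x : X, q x = Quotient.mk (MulAction.orbitRel G X) x)
    (hFmem : ∀ a b, (a, b) ∈ F → ∃ u v : X, (u, v) ∈ E ∧ q u = a ∧ q v = b)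
    {c c' : List (Quotient (MulAction.orbitRel G X))} (hcc : ChainExt F c c')
    {x : X} {l : List X} (hl : l.map q = c) (hch : l.Chain' (fun a b => (a, b) ∈ E))
    (hhd : l.head? = some x) :
    ∃ l' : List X, l'.map q = c' ∧ l'.Chain' (fun a b => (a, b) ∈ E) ∧
      l'.head? = some x ∧ ChainExt E l l' := by
  obtain ⟨⟨s, t, a, hc, hc'⟩, hhq, hlq, hcch, hc'ch⟩ := hcc
  have hlne : l ≠ [] := by intro h; rw [h] at hhd; simp at hhd
  set s' : List X := l.take s.length with hs'def
  set t' : List X := l.drop s.length with ht'def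
  have hst : l = s' ++ t' := (List.take_append_drop _ _).symm
  have hmaps : s'.map q = s := by
    rw [hs'def, List.map_take, hl, hc, List.take_left]
  have hmapt : t'.map q = t := by
    rw [ht'def, List.map_drop, hl, hc, List.drop_left]
  by_cases hs0 : s = []
  · -- insert at the front
    have hta : t.head? = some a := by
      rw [hc, hc', hs0] at hhq
      simpa using hhq
    have hqx : q x = a := by
      have h1 : (l.map q).head? = some (q x) := by
        rw [List.head?_map, hhd]; rfl
      rw [hl, hc, hs0, List.nil_append, hta] at h1
      exact (Option.some.inj h1).symm
    refine ⟨x :: l, ?_, ?_, rfl, ?_⟩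
    · rw [List.map_cons, hl, hc, hc', hs0, hqx]; simp
    · unfold List.Chain'; rw [List.isChain_cons]
      refine ⟨fun y hy => ?_, hch⟩
      rw [hhd] at hy
      simp only [Option.mem_def, Option.some.injEq] at hy
      rw [hy]; exact refl_mem_uniformity hE
    · refine ⟨⟨[], l, x, by simp, by simp⟩, ?_, ?_, hch, ?_⟩
      · rw [hhd]; rfl
      · cases l with
        | nil => exact absurd rfl hlne
        | cons y r => rw [List.getLast?_cons_cons]
      · unfold List.Chain'; rw [List.isChain_cons]
        refine ⟨fun y hy => ?_, hch⟩
        rw [hhd] at hy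
        simp only [Option.mem_def, Option.some.injEq] at hy
        rw [hy]; exact refl_mem_uniformity hE
  · by_cases ht0 : t = []
    · -- insert at the end
      have hsa : s.getLast? = some a := by
        rw [hc, hc', ht0] at hlq
        rw [List.append_nil] at hlq
        rw [hlq, List.getLast?_concat]
      obtain ⟨z, r, hzr⟩ : ∃ (z : X) (r : List X), l = r ++ [z] := by
        rcases List.eq_nil_or_concat l with h | ⟨r, z, h⟩
        · exact absurd h hlne
        · exact ⟨z, r, by rw [h, List.concat_eq_append]⟩
      have hqz : q z = a := by
        have h1 : (l.map q).getLast? = some (q z) := by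
          rw [hzr]; simp
        rw [hl, hc, ht0, List.append_nil, hsa] at h1
        exact (Option.some.inj h1).symm
      refine ⟨l ++ [z], ?_, ?_, ?_, ?_⟩
      · rw [List.map_append, hl, hc, hc', ht0]
        simp [hqz]
      · unfold List.Chain'; rw [List.isChain_append]
        refine ⟨hch, List.isChain_singleton z, fun u hu v hv => ?_⟩
        have huz : z = u := by
          rw [hzr, List.getLast?_concat] at hu
          simpa using hu
        have hvz : z = v := by simpa using hv
        rw [← huz, ← hvz]; exact refl_mem_uniformity hE
      · rw [List.head?_append_of_ne_nil _ hlne, hhd]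
      · refine ⟨⟨l, [], z, by simp, by simp⟩, ?_, ?_, hch, ?_⟩
        · rw [List.head?_append_of_ne_nil _ hlne]
        · rw [List.getLast?_concat, hzr, List.getLast?_concat]
        · unfold List.Chain'; rw [List.isChain_append]
          refine ⟨hch, List.isChain_singleton z, fun u hu v hv => ?_⟩
          have huz : z = u := by
            rw [hzr, List.getLast?_concat] at hu
            simpa using hu
          have hvz : z = v := by simpa using hv
          rw [← huz, ← hvz]; exact refl_mem_uniformity hE
    · -- insert in the middle
      have hs'ne : s' ≠ [] := by
        intro h; apply hs0; rw [← hmaps, h]; rfl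
      have ht'ne : t' ≠ [] := by
        intro h; apply ht0; rw [← hmapt, h]; rfl
      obtain ⟨z, s₁, hz⟩ : ∃ (z : X) (s₁ : List X), s' = s₁ ++ [z] := by
        rcases List.eq_nil_or_concat s' with h | ⟨s₁, z, h⟩
        · exact absurd h hs'ne
        · exact ⟨z, s₁, by rw [h, List.concat_eq_append]⟩
      obtain ⟨w, t₁, hw⟩ : ∃ (w : X) (t₁ : List X), t' = w :: t₁ :=
        List.exists_cons_of_ne_nil ht'ne |>.imp fun w ⟨t₁, h⟩ => ⟨t₁, h⟩
      have hqzlast : s.getLast? = some (q z) := by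
        rw [← hmaps, hz]; simp
      have hqwhead : t.head? = some (q w) := by
        rw [← hmapt, hw, List.map_cons]; rfl
      have hc'split := List.isChain_append.mp (hc' ▸ hc'ch)
      have hza : (q z, a) ∈ F := by
        refine hc'split.2.2 (q z) ?_ a ?_
        · rw [hqzlast]; rfl
        · rfl
      have haw : (a, q w) ∈ F := by
        have := hc'split.2.1
        obtain ⟨b, t₂, hb⟩ := List.exists_cons_of_ne_nil ht0
        rw [hb, List.isChain_cons_cons] at this
        have hbw : b = q w := by rw [hb] at hqwhead; simpa using hqwhead
        rw [← hbw]; exact this.1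
      have hlsplit := List.isChain_append.mp (hst ▸ hch)
      have hzw : (z, w) ∈ E := by
        refine hlsplit.2.2 z ?_ w ?_
        · rw [hz, List.getLast?_concat]; rfl
        · rw [hw]; rfl
      obtain ⟨v, hzv, hqv⟩ := deck.step hq hEinv hFmem (rfl : q z = q z) hza
      obtain ⟨w', hvw', hqw'⟩ := deck.step hq hEinv hFmem hqv haw
      obtain ⟨k, hk⟩ := deck.qeq hq hqw'
      have hkd : (w', w) ∈ D :=
        hED ⟨z, ⟨v, (by rw [← hEsym]; exact hvw'), (by rw [← hEsym]; exact hzv)⟩, hzw⟩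
      have hk1 : k = 1 := hDfree k w (by rw [hk]; exact hkd)
      have hww : w' = w := by rw [← hk, hk1, one_smul]
      have hvw : (v, w) ∈ E := hww ▸ hvw'
      have hchain' : (s' ++ v :: t').Chain' (fun p r => (p, r) ∈ E) := by
        unfold List.Chain'; rw [List.isChain_append]
        refine ⟨hlsplit.1, ?_, fun u hu y hy => ?_⟩
        · rw [hw, List.isChain_cons_cons]
          exact ⟨hvw, hw ▸ hlsplit.2.1⟩
        · have huz : z = u := by
            rw [hz, List.getLast?_concat] at hu; simpa using hu
          have hyv : v = y := by simpa using hy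
          rw [← huz, ← hyv]; exact hzv
      have hs'hd : s'.head? = some x := by
        have := hhd
        rw [hst, List.head?_append_of_ne_nil _ hs'ne] at this
        exact this
      refine ⟨s' ++ v :: t', ?_, hchain', ?_, ?_⟩
      · rw [List.map_append, List.map_cons, hmaps, hmapt, hqv, hc']
      · rw [List.head?_append_of_ne_nil _ hs'ne, hs'hd]
      · refine ⟨⟨s', t', v, hst, rfl⟩, ?_, ?_, hch, hchain'⟩
        · rw [hst, List.head?_append_of_ne_nil _ hs'ne, List.head?_append_of_ne_nil _ hs'ne]
        · rw [hst, List.getLast?_append_of_ne_nil _ ht'ne,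
            List.getLast?_append_of_ne_nil _ (by simp : v :: t' ≠ []), hw,
            List.getLast?_cons_cons]

/-- The lifting predicate: `l` lifts `c` starting at `x`. -/
private def deck.Lifts (E : Set (X × X)) (q : X → Quotient (MulAction.orbitRel G X))
    (l : List X) (c : List (Quotient (MulAction.orbitRel G X))) (x : X) : Prop :=
  l.map q = c ∧ l.Chain' (fun a b => (a, b) ∈ E) ∧ l.head? = some x

/-- Main induction over the homotopy. -/
private lemma deck.key (hE : E ∈ uniformity X) (hEsym : Prod.swap ⁻¹' E = E)
    (hEinv : ∀ (g : G) (x y : X), (x, y) ∈ E ↔ (g • x, g • y) ∈ E)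
    (hED : SetRel.comp (SetRel.comp E E) E ⊆ D)
    (hDfree : ∀ (g : G) (x : X), (g • x, x) ∈ D → g = 1)
    (hq : ∀ x : X, q x = Quotient.mk (MulAction.orbitRel G X) x)
    (hFmem : ∀ a b, (a, b) ∈ F → ∃ u v : X, (u, v) ∈ E ∧ q u = a ∧ q v = b) :
    ∀ c c' : List (Quotient (MulAction.orbitRel G X)),
      Relation.EqvGen (ChainExt F) c c' →
      (∀ x l, deck.Lifts E q l c x → ∃ l', deck.Lifts E q l' c' x) ∧
      (∀ x l', deck.Lifts E q l' c' x → ∃ l, deck.Lifts E q l c x) ∧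
      (∀ x l l', deck.Lifts E q l c x → deck.Lifts E q l' c' x →
        Relation.EqvGen (ChainExt E) l l' ∧ l.getLast? = l'.getLast?) := by
  intro c c' hcc
  induction hcc with
  | rel c c' h =>
    refine ⟨?_, ?_, ?_⟩
    · intro x l hl
      obtain ⟨l', h1, h2, h3, _⟩ :=
        deck.lift_ext hE hEsym hEinv hED hDfree hq hFmem h hl.1 hl.2.1 hl.2.2
      exact ⟨l', h1, h2, h3⟩
    · intro x l' hl'
      have hchd : c.head? = some (q x) := by
        rw [h.2.1, ← hl'.1, List.head?_map, hl'.2.2]; rfl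
      obtain ⟨l, h1, h2, h3⟩ :=
        deck.lift_exists hq hEinv hFmem c x h.2.2.2.1 hchd
      exact ⟨l, h1, h2, h3⟩
    · intro x l l' hl hl'
      obtain ⟨l'₀, h1, h2, h3, hext⟩ :=
        deck.lift_ext hE hEsym hEinv hED hDfree hq hFmem h hl.1 hl.2.1 hl.2.2
      have hll : l' = l'₀ := by
        refine deck.lift_unique hE hEsym hED hDfree hq l' l'₀ hl'.2.1 h2 ?_ ?_
        · rw [hl'.1, h1]
        · rw [hl'.2.2, h3]
      subst hll
      exact ⟨Relation.EqvGen.rel _ _ hext, hext.2.2.1⟩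
  | refl c =>
    refine ⟨fun x l hl => ⟨l, hl⟩, fun x l hl => ⟨l, hl⟩, ?_⟩
    intro x l l' hl hl'
    have hll : l = l' := by
      refine deck.lift_unique hE hEsym hED hDfree hq l l' hl.2.1 hl'.2.1 ?_ ?_
      · rw [hl.1, hl'.1]
      · rw [hl.2.2, hl'.2.2]
    subst hll
    exact ⟨Relation.EqvGen.refl l, rfl⟩
  | symm c c' h ih =>
    refine ⟨ih.2.1, ih.1, fun x l l' hl hl' => ?_⟩
    obtain ⟨h1, h2⟩ := ih.2.2 x l' l hl' hl
    exact ⟨Relation.EqvGen.symm _ _ h1, h2.symm⟩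
  | trans c c' c'' h1 h2 ih1 ih2 =>
    refine ⟨?_, ?_, ?_⟩
    · intro x l hl
      obtain ⟨l', hl'⟩ := ih1.1 x l hl
      exact ih2.1 x l' hl'
    · intro x l'' hl''
      obtain ⟨l', hl'⟩ := ih2.2.1 x l'' hl''
      exact ih1.2.1 x l' hl'
    · intro x l l'' hl hl''
      obtain ⟨l', hl'⟩ := ih1.1 x l hl
      obtain ⟨e1, g1⟩ := ih1.2.2 x l l' hl hl'
      obtain ⟨e2, g2⟩ := ih2.2.2 x l' l'' hl' hl''
      exact ⟨Relation.EqvGen.trans _ _ _ e1 e2, g1.trans g2⟩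

end DeckAux

/-- (Statement 17) Let `G` act on a uniform space `X` by uniform homeomorphisms, let `E` be
a symmetric `G`-invariant entourage and `D` an entourage with `E∘E∘E ⊆ D` such that
`(g·x, x) ∈ D` for some `x` forces `g = 1`.  Let `q : X → X/G` be the orbit map and
`F := (q × q)(E)`.  If `γ = (x₀, …, xₙ)` is an `E`-chain with `xₙ = g·x₀` and the `F`-loop
`q(γ)` is `F`-homotopic to the trivial chain `(q(x₀))`, then `g = 1` (so `γ` is an `E`-loop)
and `γ` is `E`-homotopic to the trivial chain `(x₀)`. -/
theorem deck_injectivity {G : Type u'} {X : Type u} [Group G] [UniformSpace X]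
    [MulAction G X]
    (hact : ∀ g : G, UniformContinuous fun x : X => g • x)
    (E : Set (X × X)) (hE : E ∈ uniformity X) (hEsym : Prod.swap ⁻¹' E = E)
    (hEinv : ∀ (g : G) (x y : X), (x, y) ∈ E ↔ (g • x, g • y) ∈ E)
    (D : Set (X × X)) (hD : D ∈ uniformity X)
    (hED : SetRel.comp (SetRel.comp E E) E ⊆ D)
    (hDfree : ∀ (g : G) (x : X), (g • x, x) ∈ D → g = 1)
    (q : X → Quotient (MulAction.orbitRel G X))
    (hqdef : ∀ x : X, q x = Quotient.mk (MulAction.orbitRel G X) x)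
    (F : Set (Quotient (MulAction.orbitRel G X) × Quotient (MulAction.orbitRel G X)))
    (hFdef : F = (fun p : X × X => (q p.1, q p.2)) '' E)
    (γ : List X) (x₀ : X) (g : G)
    (hγ : IsChainList E γ) (hhead : γ.head? = some x₀)
    (hlast : γ.getLast? = some (g • x₀))
    (hqγ : ChainHomotopic F (γ.map q) [q x₀]) :
    g = 1 ∧ ChainHomotopic E γ [x₀] := by
  have hFmem : ∀ a b, (a, b) ∈ F → ∃ u v : X, (u, v) ∈ E ∧ q u = a ∧ q v = b := by
    intro a b hab
    rw [hFdef] at hab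
    obtain ⟨⟨u, v⟩, huv, heq⟩ := hab
    exact ⟨u, v, huv, congrArg Prod.fst heq, congrArg Prod.snd heq⟩
  have hl1 : deck.Lifts E q γ (γ.map q) x₀ := ⟨rfl, hγ.2, hhead⟩
  have hl2 : deck.Lifts E q [x₀] [q x₀] x₀ := ⟨rfl, List.isChain_singleton x₀, rfl⟩
  obtain ⟨hhom, hlasteq⟩ :=
    (deck.key hE hEsym hEinv hED hDfree hqdef hFmem _ _ hqγ).2.2 x₀ γ [x₀] hl1 hl2
  have hgx : g • x₀ = x₀ := by
    rw [hlast] at hlasteq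
    simpa using hlasteq
  exact ⟨hDfree g x₀ (by rw [hgx]; exact refl_mem_uniformity hD), hhom⟩
end
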